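/- arXiv:1212.1542 — 2 statements merged into one kernel-verified Lean document; each statement's English description precedes it below -/
import Mathlib

section
/- Let κ be a measurable cardinal and let U be a normal ultrafilter on κ such that {α < κ : α is a measurable cardinal} ∈ U. Then {α < κ : α is a compact cardinal} ∈ U if and only if κ is a limit of compact cardinals, i.e. the set of compact cardinals below κ is unbounded in κ. -/
open Set

namespace Separability

/-- `F` is an ultrafilter on the set `D` (members of `F` are subsets of `D`). -/
structure IsUltrafilterOnSet {σ : Type*} (D : Set σ) (F : Set (Set σ)) : Prop where
  sets_subset : ∀ X ∈ F, X ⊆ D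
  univ_mem : D ∈ F
  empty_not_mem : ∅ ∉ F
  superset_mem : ∀ X ∈ F, ∀ Y, Y ⊆ D → X ⊆ Y → Y ∈ F
  inter_mem : ∀ X ∈ F, ∀ Y ∈ F, X ∩ Y ∈ F
  mem_or_compl_mem : ∀ X, X ⊆ D → (X ∈ F ∨ D \ X ∈ F)

/-- An ultrafilter on (the type of ordinals below) `κ`. -/
def IsUltrafilterOn (κ : Ordinal) (F : Set (Set Ordinal)) : Prop :=
  IsUltrafilterOnSet (Set.Iio κ) F

/-- `F` is a *normal* ultrafilter on `κ`: it is an ultrafilter on `κ`, it contains every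
co-bounded subset of `κ`, and every function that is regressive on some member of `F`
is constant on some member of `F`. -/
def IsNormalUltrafilterOn (κ : Ordinal) (F : Set (Set Ordinal)) : Prop :=
  IsUltrafilterOn κ F ∧
  (∀ α < κ, {β | α ≤ β ∧ β < κ} ∈ F) ∧
  (∀ f : Ordinal → Ordinal, ∀ S ∈ F, (∀ β ∈ S, 0 < β → f β < β) →
    ∃ T ∈ F, ∃ γ, ∀ β ∈ T, f β = γ)

/-- The ordinal `κ` is a cardinal. -/
def IsCard (κ : Ordinal) : Prop := κ.card.ord = κ

/-- `F` (an ultrafilter on the set `D`) is `κ`-complete: it is closed under intersections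
of families of fewer than `κ` sets. -/
def IsComplete {σ : Type*} (κ : Ordinal) (D : Set σ) (F : Set (Set σ)) : Prop :=
  ∀ δ < κ, ∀ g : Set.Iio δ → Set σ, (∀ i, g i ∈ F) → (D ∩ ⋂ i, g i) ∈ F

/-- `F` is nonprincipal: it contains no singleton. -/
def IsNonprincipal {σ : Type*} (F : Set (Set σ)) : Prop := ∀ b : σ, {b} ∉ F

/-- `α` is a measurable cardinal: an uncountable cardinal carrying a nonprincipal
`α`-complete ultrafilter on `α`. -/
def IsMeasurable (α : Ordinal) : Prop :=
  IsCard α ∧ Ordinal.omega0 < α ∧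
    ∃ F, IsUltrafilterOn α F ∧ IsNonprincipal F ∧ IsComplete α (Set.Iio α) F

/-- `P_κ(λ)`: the subsets of `λ` of cardinality less than `κ`. -/
def sP (κ lam : Ordinal.{0}) : Set (Set Ordinal.{0}) :=
  {x | x ⊆ Set.Iio lam ∧ Cardinal.mk x < Cardinal.lift.{1} κ.card}

/-- `F`, an ultrafilter on `P_κ(λ)`, is *fine*:
for every `i < λ` the set `{x ∈ P_κ(λ) : i ∈ x}` belongs to `F`. -/
def IsFine (κ lam : Ordinal) (F : Set (Set (Set Ordinal))) : Prop :=
  ∀ i < lam, {x | x ∈ sP κ lam ∧ i ∈ x} ∈ F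

/-- `κ` is a compact (strongly compact) cardinal: an uncountable cardinal such that for every
cardinal `λ ≥ κ` there is a `κ`-complete fine ultrafilter on `P_κ(λ)`. -/
def IsCompact (κ : Ordinal) : Prop :=
  IsCard κ ∧ Ordinal.omega0 < κ ∧
    ∀ lam, IsCard lam → κ ≤ lam →
      ∃ F, IsUltrafilterOnSet (sP κ lam) F ∧ IsComplete κ (sP κ lam) F ∧ IsFine κ lam F

/-- `F`, an ultrafilter on `P_κ(λ)`, is *normal*: every choice function on a member of `F`
(`f x ∈ x` for all `x` in some member of `F`) is constant on some member of `F`. -/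
def IsNormalFineMeasure (F : Set (Set (Set Ordinal))) : Prop :=
  ∀ f : Set Ordinal → Ordinal, ∀ S ∈ F, (∀ x ∈ S, f x ∈ x) →
    ∃ T ∈ F, ∃ γ, ∀ x ∈ T, f x = γ

/-- `κ` is a supercompact cardinal: for every cardinal `λ ≥ κ` there is a `κ`-complete
fine normal ultrafilter on `P_κ(λ)`. -/
def IsSupercompact (κ : Ordinal) : Prop :=
  IsCard κ ∧
    ∀ lam, IsCard lam → κ ≤ lam →
      ∃ F, IsUltrafilterOnSet (sP κ lam) F ∧ IsComplete κ (sP κ lam) F ∧ IsFine κ lam F ∧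
        IsNormalFineMeasure F

/-- The set of measurable cardinals below `κ`. -/
def measSet (κ : Ordinal) : Set Ordinal := {α | α < κ ∧ IsMeasurable α}

/-- `S_X = {α < κ : α is measurable and X ∩ α ∈ U_α}`. -/
def sX (κ : Ordinal) (U : Ordinal → Set (Set Ordinal)) (X : Set Ordinal) : Set Ordinal :=
  {α | α < κ ∧ IsMeasurable α ∧ X ∩ Set.Iio α ∈ U α}

/-- The sum of `⟨U_α : α measurable below κ⟩` over `V`: `Y` belongs to the sum iff
`S_Y ∈ V`. -/
def sumUF (κ : Ordinal) (U : Ordinal → Set (Set Ordinal)) (V : Set (Set Ordinal)) :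
    Set (Set Ordinal) :=
  {Y | Y ⊆ Set.Iio κ ∧ sX κ U Y ∈ V}

/- ---------- Auxiliary lemmas ---------- -/

lemma mem_nonempty {σ : Type*} {D : Set σ} {F : Set (Set σ)}
    (hF : IsUltrafilterOnSet D F) {S : Set σ} (hS : S ∈ F) : S.Nonempty := by
  rcases S.eq_empty_or_nonempty with h | h
  · exact absurd (h ▸ hS) hF.empty_not_mem
  · exact h

lemma succ_lt_of_isCard {κ : Ordinal} (h1 : IsCard κ) (h2 : Ordinal.omega0 < κ)
    {β : Ordinal} (h : β < κ) : β + 1 < κ := by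
  have hal : Cardinal.aleph0 ≤ κ.card := by
    have := Ordinal.card_le_card h2.le
    rwa [Ordinal.card_omega0] at this
  have hlim : Order.IsSuccLimit κ := by
    have := Cardinal.isSuccLimit_ord hal
    rwa [h1] at this
  have := hlim.succ_lt h
  rwa [Ordinal.add_one_eq_succ]

lemma card_lt_card {β κ : Ordinal} (hβ : IsCard β) (hκ : IsCard κ) (h : β < κ) :
    β.card < κ.card := by
  rw [← Cardinal.ord_lt_ord, hβ, hκ]; exact h

lemma sP_mono {β κ lam : Ordinal.{0}} (h : β.card ≤ κ.card) : sP β lam ⊆ sP κ lam :=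
  fun x hx => ⟨hx.1, hx.2.trans_le (Cardinal.lift_le.mpr h)⟩

/-- A nonprincipal complete ultrafilter on `κ` contains every co-bounded set. -/
lemma cobounded_mem {κ : Ordinal} {F : Set (Set Ordinal)} (hF : IsUltrafilterOn κ F)
    (hnp : IsNonprincipal F) (hc : IsComplete κ (Set.Iio κ) F)
    {γ : Ordinal} (hγ : γ < κ) : {ξ | γ ≤ ξ ∧ ξ < κ} ∈ F := by
  have hg : ∀ i : Set.Iio γ, Set.Iio κ \ {i.1} ∈ F := by
    intro i
    rcases hF.mem_or_compl_mem {i.1} (by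
      intro x hx
      rcases hx with rfl
      exact lt_trans i.2 hγ) with h | h
    · exact absurd h (hnp i.1)
    · exact h
  have hmem := hc γ hγ (fun i => Set.Iio κ \ {i.1}) hg
  have heq : Set.Iio κ ∩ ⋂ i : Set.Iio γ, (Set.Iio κ \ {i.1}) = {ξ | γ ≤ ξ ∧ ξ < κ} := by
    ext ξ
    simp only [Set.mem_inter_iff, Set.mem_iInter, Set.mem_diff, Set.mem_Iio,
      Set.mem_singleton_iff, Set.mem_setOf_eq]
    constructor
    · rintro ⟨h1, h2⟩
      refine ⟨?_, h1⟩
      by_contra hlt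
      push_neg at hlt
      exact (h2 ⟨ξ, hlt⟩).2 rfl
    · rintro ⟨h1, h2⟩
      exact ⟨h2, fun i => ⟨h2, fun he => absurd (he ▸ i.2) (not_lt.mpr h1)⟩⟩
  rwa [heq] at hmem

/-- Menas: a measurable limit of compact cardinals is compact. -/
lemma menas {α : Ordinal} (hα : IsMeasurable α)
    (hub : ∀ β < α, ∃ γ, β < γ ∧ γ < α ∧ IsCompact γ) : IsCompact α := by
  obtain ⟨hcard, hω, W, hW, hnp, hcomp⟩ := hα
  refine ⟨hcard, hω, ?_⟩
  intro lam hlam hαlam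
  -- choose, for each `ξ < α`, a compact cardinal `e ξ _` strictly between `ξ` and `α`
  choose e he1 he2 he3 using hub
  -- choose fine measures on the `sP β lam` for compact `β ≤ lam`
  have hGex : ∀ β, IsCompact β → β ≤ lam →
      ∃ G, IsUltrafilterOnSet (sP β lam) G ∧ IsComplete β (sP β lam) G ∧ IsFine β lam G :=
    fun β hβ hle => hβ.2.2 lam hlam hle
  choose G hG1 hG2 hG3 using hGex
  have hle : ∀ ξ (h : ξ < α), e ξ h ≤ lam := fun ξ h => ((he2 ξ h).le.trans hαlam)
  -- the projection of a set to `sP (e ξ h) lam` and its measure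
  set A : Set (Set Ordinal) → Set Ordinal :=
    fun Y => {ξ | ∃ h : ξ < α, Y ∩ sP (e ξ h) lam ∈ G (e ξ h) (he3 ξ h) (hle ξ h)} with hA
  have hsub : ∀ ξ (h : ξ < α), sP (e ξ h) lam ⊆ sP α lam := by
    intro ξ h
    exact sP_mono (card_lt_card (he3 ξ h).1 hcard (he2 ξ h)).le
  have hAsub : ∀ Y, A Y ⊆ Set.Iio α := by
    rintro Y ξ ⟨h, -⟩; exact h
  set F : Set (Set (Set Ordinal)) := {Y | Y ⊆ sP α lam ∧ A Y ∈ W} with hF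
  refine ⟨F, ⟨?_, ?_, ?_, ?_, ?_, ?_⟩, ?_, ?_⟩
  · -- sets_subset
    intro X hX; exact hX.1
  · -- univ_mem
    refine ⟨le_refl _, ?_⟩
    have : A (sP α lam) = Set.Iio α := by
      apply Set.Subset.antisymm (hAsub _)
      intro ξ hξ
      refine ⟨hξ, ?_⟩
      have : sP α lam ∩ sP (e ξ hξ) lam = sP (e ξ hξ) lam :=
        Set.inter_eq_self_of_subset_right (hsub ξ hξ)
      rw [this]
      exact (hG1 _ (he3 ξ hξ) (hle ξ hξ)).univ_mem
    rw [this]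
    exact hW.univ_mem
  · -- empty_not_mem
    rintro ⟨-, hmem⟩
    have : A ∅ = ∅ := by
      apply Set.eq_empty_iff_forall_notMem.mpr
      rintro ξ ⟨h, hm⟩
      rw [Set.empty_inter] at hm
      exact (hG1 _ (he3 ξ h) (hle ξ h)).empty_not_mem hm
    rw [this] at hmem
    exact hW.empty_not_mem hmem
  · -- superset_mem
    rintro X ⟨hX1, hX2⟩ Y hY1 hXY
    refine ⟨hY1, ?_⟩
    refine hW.superset_mem _ hX2 _ (hAsub _) ?_
    rintro ξ ⟨h, hm⟩
    refine ⟨h, ?_⟩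
    exact (hG1 _ (he3 ξ h) (hle ξ h)).superset_mem _ hm _ Set.inter_subset_right
      (Set.inter_subset_inter_left _ hXY)
  · -- inter_mem
    rintro X ⟨hX1, hX2⟩ Y ⟨hY1, hY2⟩
    refine ⟨fun x hx => hX1 hx.1, ?_⟩
    refine hW.superset_mem _ (hW.inter_mem _ hX2 _ hY2) _ (hAsub _) ?_
    rintro ξ ⟨⟨h, hmX⟩, ⟨h', hmY⟩⟩
    refine ⟨h, ?_⟩
    have heq : (X ∩ Y) ∩ sP (e ξ h) lam =
        (X ∩ sP (e ξ h) lam) ∩ (Y ∩ sP (e ξ h) lam) := by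
      ext x; simp only [Set.mem_inter_iff]; tauto
    rw [heq]
    exact (hG1 _ (he3 ξ h) (hle ξ h)).inter_mem _ hmX _ hmY
  · -- mem_or_compl_mem
    intro X hX
    by_cases hm : A X ∈ W
    · exact Or.inl ⟨hX, hm⟩
    · right
      refine ⟨Set.diff_subset, ?_⟩
      rcases hW.mem_or_compl_mem (A X) (hAsub X) with h | h
      · exact absurd h hm
      refine hW.superset_mem _ h _ (hAsub _) ?_
      rintro ξ ⟨hξ, hnot⟩
      refine ⟨hξ, ?_⟩
      have hXe : X ∩ sP (e ξ hξ) lam ∉ G (e ξ hξ) (he3 ξ hξ) (hle ξ hξ) := by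
        intro hc; exact hnot ⟨hξ, hc⟩
      rcases (hG1 _ (he3 ξ hξ) (hle ξ hξ)).mem_or_compl_mem (X ∩ sP (e ξ hξ) lam)
        Set.inter_subset_right with h1 | h1
      · exact absurd h1 hXe
      · have heq : sP (e ξ hξ) lam \ (X ∩ sP (e ξ hξ) lam) =
            (sP α lam \ X) ∩ sP (e ξ hξ) lam := by
          ext x
          simp only [Set.mem_diff, Set.mem_inter_iff]
          constructor
          · rintro ⟨h2, h3⟩
            exact ⟨⟨hsub ξ hξ h2, fun hx => h3 ⟨hx, h2⟩⟩, h2⟩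
          · rintro ⟨⟨-, h3⟩, h4⟩
            exact ⟨h4, fun hx => h3 hx.1⟩
        rwa [heq] at h1
  · -- completeness
    intro δ hδ g hg
    refine ⟨Set.inter_subset_left, ?_⟩
    have h1 : Set.Iio α ∩ ⋂ i : Set.Iio δ, A (g i) ∈ W := hcomp δ hδ _ fun i => (hg i).2
    have h2 : {ξ | δ ≤ ξ ∧ ξ < α} ∈ W := cobounded_mem hW hnp hcomp hδ
    refine hW.superset_mem _ (hW.inter_mem _ h1 _ h2) _ (hAsub _) ?_
    rintro ξ ⟨⟨hξ, hall⟩, hδξ, -⟩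
    clear hA
    rw [Set.mem_iInter] at hall
    refine ⟨hξ, ?_⟩
    have hδe : δ < e ξ hξ := lt_of_le_of_lt hδξ (he1 ξ hξ)
    have hmem := hG2 _ (he3 ξ hξ) (hle ξ hξ) δ hδe
      (fun i => g i ∩ sP (e ξ hξ) lam) (fun i => by
        rcases hall i with ⟨h', hm⟩
        exact hm)
    have heq : sP (e ξ hξ) lam ∩ ⋂ i : Set.Iio δ, (g i ∩ sP (e ξ hξ) lam) =
        (sP α lam ∩ ⋂ i : Set.Iio δ, g i) ∩ sP (e ξ hξ) lam := by
      ext x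
      simp only [Set.mem_inter_iff, Set.mem_iInter]
      constructor
      · rintro ⟨h2, h3⟩
        exact ⟨⟨hsub ξ hξ h2, fun i => (h3 i).1⟩, h2⟩
      · rintro ⟨⟨h2, h3⟩, h4⟩
        exact ⟨h4, fun i => ⟨h3 i, h4⟩⟩
    rwa [heq] at hmem
  · -- fineness
    intro i hi
    refine ⟨fun x hx => hx.1, ?_⟩
    refine hW.superset_mem _ hW.univ_mem _ (hAsub _) ?_
    intro ξ hξ
    refine ⟨hξ, ?_⟩
    have heq : {x | x ∈ sP α lam ∧ i ∈ x} ∩ sP (e ξ hξ) lam =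
        {x | x ∈ sP (e ξ hξ) lam ∧ i ∈ x} := by
      ext x
      simp only [Set.mem_inter_iff, Set.mem_setOf_eq]
      constructor
      · rintro ⟨⟨-, h2⟩, h3⟩; exact ⟨h3, h2⟩
      · rintro ⟨h2, h3⟩; exact ⟨⟨hsub ξ hξ h2, h3⟩, h2⟩
    rw [heq]
    exact hG3 _ (he3 ξ hξ) (hle ξ hξ) i hi

/-- If `κ` is measurable and `U` is a normal ultrafilter on `κ` containing the measurables
below `κ`, then `U` contains the compact cardinals below `κ` iff `κ` is a limit of compact
cardinals. -/
theorem compacts_mem_iff_limit_of_compacts (κ : Ordinal) (hκ : IsMeasurable κ)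
    (U : Set (Set Ordinal)) (hU : IsNormalUltrafilterOn κ U)
    (hmeas : {α | α < κ ∧ IsMeasurable α} ∈ U) :
    {α | α < κ ∧ IsCompact α} ∈ U ↔ (∀ β < κ, ∃ α, β < α ∧ α < κ ∧ IsCompact α) := by
  obtain ⟨hcard, hω, -⟩ := hκ
  constructor
  · -- forward: the compacts are in `U`, hence unbounded
    intro hcomp β hβ
    have hsucc : β + 1 < κ := succ_lt_of_isCard hcard hω hβ
    have htail : {γ | β + 1 ≤ γ ∧ γ < κ} ∈ U := hU.2.1 _ hsucc
    have hmem := hU.1.inter_mem _ hcomp _ htail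
    obtain ⟨a, ⟨ha1, ha2⟩, ha3, ha4⟩ := mem_nonempty hU.1 hmem
    refine ⟨a, ?_, ha1, ha2⟩
    have : β < β + 1 := lt_add_one β
    exact lt_of_lt_of_le this ha3
  · -- backward: `κ` is a limit of compacts
    intro hub
    classical
    -- the set of ordinals below `κ` that are limits of compact cardinals
    set L : Set Ordinal := {a | a < κ ∧ ∀ β < a, ∃ γ, β < γ ∧ γ < a ∧ IsCompact γ} with hL
    -- Step 1: `L ∈ U`.
    have hLU : L ∈ U := by
      rcases hU.1.mem_or_compl_mem L (fun a ha => ha.1) with h | h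
      · exact h
      exfalso
      -- on the complement, the compacts below are bounded; pick the bound regressively
      set f : Ordinal → Ordinal := fun a =>
        if h : ∃ β, β < a ∧ ∀ γ, β < γ → γ < a → ¬IsCompact γ then h.choose else 0 with hf
      have hEx : ∀ a ∈ Set.Iio κ \ L, ∃ β, β < a ∧ ∀ γ, β < γ → γ < a → ¬IsCompact γ := by
        rintro a ⟨ha1, ha2⟩
        by_contra hcon
        push_neg at hcon
        exact ha2 ⟨ha1, fun β hβ => hcon β hβ⟩
      have hreg : ∀ a ∈ Set.Iio κ \ L, 0 < a → f a < a := by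
        intro a ha _
        have hx := hEx a ha
        simp only [hf, dif_pos hx]
        exact hx.choose_spec.1
      obtain ⟨T, hT, γ₀, hγ₀⟩ := hU.2.2 f _ h hreg
      -- intersect with the complement and a tail to find a contradiction
      have hT1 : T ∩ (Set.Iio κ \ L) ∈ U := hU.1.inter_mem _ hT _ h
      -- first find that γ₀ < κ
      have h1κ : (1 : Ordinal) < κ := lt_trans Ordinal.one_lt_omega0 hω
      have hT2 : T ∩ (Set.Iio κ \ L) ∩ {ξ | 1 ≤ ξ ∧ ξ < κ} ∈ U :=
        hU.1.inter_mem _ hT1 _ (hU.2.1 _ h1κ)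
      obtain ⟨a₀, ⟨ha₀T, ha₀S⟩, -, -⟩ := mem_nonempty hU.1 hT2
      have hx₀ := hEx a₀ ha₀S
      have hfa₀ : f a₀ = γ₀ := hγ₀ a₀ ha₀T
      have hγ₀κ : γ₀ < κ := by
        rw [← hfa₀]
        simp only [hf, dif_pos hx₀]
        exact lt_trans hx₀.choose_spec.1 ha₀S.1
      -- pick a compact cardinal above γ₀
      obtain ⟨c, hc1, hc2, hc3⟩ := hub γ₀ hγ₀κ
      have hcs : c + 1 < κ := succ_lt_of_isCard hcard hω hc2
      have hT3 : T ∩ (Set.Iio κ \ L) ∩ {ξ | c + 1 ≤ ξ ∧ ξ < κ} ∈ U :=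
        hU.1.inter_mem _ hT1 _ (hU.2.1 _ hcs)
      obtain ⟨a₁, ⟨ha₁T, ha₁S⟩, ha₁c, -⟩ := mem_nonempty hU.1 hT3
      have hx₁ := hEx a₁ ha₁S
      have hfa₁ : f a₁ = γ₀ := hγ₀ a₁ ha₁T
      have hspec := hx₁.choose_spec
      have hch : hx₁.choose = γ₀ := by
        rw [← hfa₁]; simp only [hf, dif_pos hx₁]
      rw [hch] at hspec
      have hca₁ : c < a₁ := lt_of_lt_of_le (lt_add_one c) ha₁c
      exact hspec.2 c hc1 hca₁ hc3
    -- Step 2: every element of `measurables ∩ L` is compact, by Menas.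
    have hML : {α | α < κ ∧ IsMeasurable α} ∩ L ∈ U := hU.1.inter_mem _ hmeas _ hLU
    refine hU.1.superset_mem _ hML _ (fun a ha => ha.1) ?_
    rintro a ⟨⟨ha1, ha2⟩, -, ha3⟩
    exact ⟨ha1, menas ha2 ha3⟩

end Separability
end

section
/- Let κ be a measurable cardinal and let V be a normal ultrafilter on κ such that {α < κ : α is a supercompact cardinal} ∈ V. Then there exists a normal ultrafilter W on κ such that {α < κ : α is a compact cardinal} ∈ W but {α < κ : α is a supercompact cardinal} ∉ W. -/
open Set

namespace Separability

/-! ### Basic ultrafilter utilities -/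

section Basics

variable {σ : Type*} {D : Set σ} {F : Set (Set σ)} {X Y : Set σ}

theorem IsUltrafilterOnSet.nonempty_of_mem (hF : IsUltrafilterOnSet D F) (hX : X ∈ F) :
    X.Nonempty := by
  rcases X.eq_empty_or_nonempty with h | h
  · subst h; exact absurd hX hF.empty_not_mem
  · exact h

theorem IsUltrafilterOnSet.inter_nonempty (hF : IsUltrafilterOnSet D F)
    (hX : X ∈ F) (hY : Y ∈ F) : (X ∩ Y).Nonempty :=
  hF.nonempty_of_mem (hF.inter_mem _ hX _ hY)

theorem IsUltrafilterOnSet.compl_not_mem (hF : IsUltrafilterOnSet D F) (hX : X ∈ F) :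
    D \ X ∉ F := by
  intro h
  obtain ⟨z, hz1, -, hz2⟩ := hF.inter_nonempty hX h
  exact hz2 hz1

theorem IsUltrafilterOnSet.compl_mem_of_not_mem (hF : IsUltrafilterOnSet D F)
    (hXD : X ⊆ D) (hX : X ∉ F) : D \ X ∈ F :=
  (hF.mem_or_compl_mem X hXD).resolve_left hX

theorem IsUltrafilterOnSet.not_mem_of_disjoint (hF : IsUltrafilterOnSet D F)
    (hY : Y ∈ F) (hd : X ∩ Y = ∅) : X ∉ F := by
  intro hX
  obtain ⟨z, hz⟩ := hF.inter_nonempty hX hY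
  rw [hd] at hz; exact hz

end Basics

/-! ### Normal ultrafilters on ordinals -/

theorem IsMeasurable.isLimit {κ : Ordinal} (h : IsMeasurable κ) : Order.IsSuccLimit κ := by
  obtain ⟨hc, hω, -⟩ := h
  have h1 : Cardinal.aleph0 ≤ κ.card := by
    rw [← Ordinal.card_omega0]; exact Ordinal.card_le_card hω.le
  have h2 := Cardinal.isSuccLimit_ord h1
  rwa [hc] at h2

namespace IsNormalUltrafilterOn

variable {κ : Ordinal} {V : Set (Set Ordinal)} {A : Set Ordinal}

theorem uf (hV : IsNormalUltrafilterOn κ V) : IsUltrafilterOnSet (Set.Iio κ) V := hV.1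

theorem cobounded (hV : IsNormalUltrafilterOn κ V) {α : Ordinal} (hα : α < κ) :
    {β | α ≤ β ∧ β < κ} ∈ V := hV.2.1 α hα

theorem exists_gt_of_mem (hκ : Order.IsSuccLimit κ) (hV : IsNormalUltrafilterOn κ V) (hA : A ∈ V)
    {γ : Ordinal} (hγ : γ < κ) : ∃ a ∈ A, γ < a ∧ a < κ := by
  have hco := hV.cobounded (hκ.succ_lt hγ)
  obtain ⟨a, haA, ha1, ha2⟩ := hV.uf.inter_nonempty hA hco
  exact ⟨a, haA, Order.succ_le_iff.1 ha1, ha2⟩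

end IsNormalUltrafilterOn

/-- the set of β < α in which A is unbounded (and nonempty below): "limit points". -/
def LPs (A : Set Ordinal) (α : Ordinal) : Set Ordinal :=
  {β | β < α ∧ ∀ γ < β, ∃ a ∈ A, a < β ∧ γ < a}

theorem LPs_mem {α : Ordinal} {u : Set (Set Ordinal)} (hα : Order.IsSuccLimit α)
    (hu : IsNormalUltrafilterOn α u) (A : Set Ordinal)
    (hA : ∀ γ < α, ∃ a ∈ A, γ < a ∧ a < α) : LPs A α ∈ u := by
  by_contra hnot
  have hsub : LPs A α ⊆ Set.Iio α := fun β hβ => hβ.1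
  have hNB : Set.Iio α \ LPs A α ∈ u := hu.uf.compl_mem_of_not_mem hsub hnot
  set f : Ordinal → Ordinal := fun β => sSup {a | a ∈ A ∧ a < β} with hf
  have hreg : ∀ β ∈ Set.Iio α \ LPs A α, 0 < β → f β < β := by
    rintro β ⟨hβα, hβ⟩ h0
    have : ∃ γ < β, ∀ a ∈ A, a < β → a ≤ γ := by
      by_contra hcon
      push_neg at hcon
      exact hβ ⟨hβα, fun γ hγ => by
        obtain ⟨a, haA, haβ, hγa⟩ := hcon γ hγ
        exact ⟨a, haA, haβ, hγa⟩⟩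
    obtain ⟨γ, hγβ, hbd⟩ := this
    rcases Set.eq_empty_or_nonempty {a | a ∈ A ∧ a < β} with he | hne
    · rw [hf]; simp only [he, csSup_empty]; exact h0
    · calc f β ≤ γ := csSup_le hne (fun a ha => hbd a ha.1 ha.2)
        _ < β := hγβ
  obtain ⟨T, hT, γ₀, hγ₀⟩ := hu.2.2 f _ hNB hreg
  -- γ₀ < α
  have hone : (1 : Ordinal) < α := Ordinal.one_lt_of_isSuccLimit hα
  have h1 : {β | 1 ≤ β ∧ β < α} ∈ u := hu.cobounded hone
  obtain ⟨β₁, hβ₁⟩ := hu.uf.inter_nonempty (hu.uf.inter_mem _ hT _ hNB) h1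
  have hγ₀β₁ : γ₀ < β₁ := by
    have := hreg β₁ hβ₁.1.2 (lt_of_lt_of_le zero_lt_one hβ₁.2.1)
    rwa [hγ₀ β₁ hβ₁.1.1] at this
  have hγ₀α : γ₀ < α := hγ₀β₁.trans hβ₁.2.2
  obtain ⟨a, haA, hγ₀a, haα⟩ := hA γ₀ hγ₀α
  have ha1 : a + 1 < α := hα.succ_lt haα
  obtain ⟨β₂, hβ₂⟩ := hu.uf.inter_nonempty (hu.uf.inter_mem _ hT _ hNB) (hu.cobounded ha1)
  have haβ₂ : a < β₂ := lt_of_lt_of_le (lt_add_one a) hβ₂.2.1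
  have hbdd : BddAbove {a' | a' ∈ A ∧ a' < β₂} :=
    BddAbove.mono (fun a' ha' => ha'.2) bddAbove_Iio
  have : a ≤ f β₂ := le_csSup hbdd ⟨haA, haβ₂⟩
  rw [hγ₀ β₂ hβ₂.1.1] at this
  exact absurd this (not_le.2 hγ₀a)

/-! ### The projection analysis of a normal fine measure on `P_α(lam)` -/

/-- `axf α x` : the ordinal such that `x ∩ Iio α = Iio (axf α x)` for good `x`. -/
noncomputable def axf (α : Ordinal.{0}) (x : Set Ordinal.{0}) : Ordinal :=
  sSup ((fun o => o + 1) '' (x ∩ Set.Iio α))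

/-- Good sets: members of `sP α lam` whose intersection with `Iio α` is an initial segment
of length `axf α x < α`. -/
def Pgood (α lam : Ordinal.{0}) : Set (Set Ordinal.{0}) :=
  {x | x ∈ sP α lam ∧ x ∩ Set.Iio α = Set.Iio (axf α x) ∧ axf α x < α}

/-- All the data of a normal fine `α`-complete ultrafilter on `P_α(lam)`,
with `lam` of cardinality `2^card α`. -/
structure PSetup (α lam : Ordinal.{0}) (F : Set (Set (Set Ordinal.{0}))) : Prop where
  hcard : IsCard α
  hαlam : α ≤ lam
  huf : IsUltrafilterOnSet (sP α lam) F
  hcompl : IsComplete α (sP α lam) F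
  hfine : IsFine α lam F
  hnorm : IsNormalFineMeasure F

namespace PSetup

variable {α lam : Ordinal.{0}} {F : Set (Set (Set Ordinal.{0}))} (h : PSetup α lam F)
include h

theorem alpha_pos : 0 < α := by
  rcases eq_zero_or_pos α with h0 | h0
  · exfalso
    have : sP α lam = ∅ := by
      ext x
      simp only [sP, Set.mem_setOf_eq, Set.mem_empty_iff_false, iff_false, not_and]
      intro _
      rw [h0]
      simp
    exact h.huf.empty_not_mem (this ▸ h.huf.univ_mem)
  · exact h0

theorem fine_mem {ζ : Ordinal} (hζ : ζ < lam) : {x | x ∈ sP α lam ∧ ζ ∈ x} ∈ F :=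
  h.hfine ζ hζ

/-- Members of `F` are subsets of `sP`. -/
theorem mem_sP {S : Set (Set Ordinal)} (hS : S ∈ F) : S ⊆ sP α lam := h.huf.sets_subset _ hS

/-- `{x : Iio β ⊆ x} ∈ F` for `β < α`. -/
theorem seg_mem {β : Ordinal} (hβ : β < α) : {x | x ∈ sP α lam ∧ Set.Iio β ⊆ x} ∈ F := by
  have hc := h.hcompl β hβ (fun i => {x | x ∈ sP α lam ∧ (i : Ordinal) ∈ x})
    (fun i => h.fine_mem (lt_of_lt_of_le (i.2.trans_le hβ.le) h.hαlam))
  refine h.huf.superset_mem _ hc _ (fun x hx => hx.1) ?_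
  intro x hx
  refine ⟨hx.1, fun γ hγ => ?_⟩
  have := Set.mem_iInter.1 hx.2 ⟨γ, hγ⟩
  exact this.2

/-- smallness: `mk (Iio β) ≤ mk x` for `Iio β ⊆ x`, `x ∈ sP` gives `β < α`. -/
theorem lt_alpha_of_seg {β : Ordinal} {x : Set Ordinal} (hx : x ∈ sP α lam)
    (hseg : Set.Iio β ⊆ x) : β < α := by
  have h1 : Cardinal.mk (Set.Iio β) ≤ Cardinal.mk x := Cardinal.mk_le_mk_of_subset hseg
  rw [Ordinal.mk_Iio_ordinal] at h1
  have h2 : Cardinal.lift.{1} β.card < Cardinal.lift.{1} α.card := lt_of_le_of_lt h1 hx.2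
  have h3 : β.card < α.card := Cardinal.lift_lt.1 h2
  have h4 : β < α.card.ord := Cardinal.lt_ord.2 h3
  rwa [h.hcard] at h4

theorem good_mem : Pgood α lam ∈ F := by
  set T : Set (Set Ordinal) := {x | x ∈ sP α lam ∧ ∀ ζ ∈ x ∩ Set.Iio α, Set.Iio ζ ⊆ x} with hT
  have hTF : T ∈ F := by
    by_contra hnot
    have hTsub : T ⊆ sP α lam := fun x hx => hx.1
    have hcpl : sP α lam \ T ∈ F := h.huf.compl_mem_of_not_mem hTsub hnot
    have hch : ∀ x ∈ sP α lam \ T, ∃ ζ, ζ ∈ x ∩ Set.Iio α ∧ ¬ Set.Iio ζ ⊆ x := by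
      rintro x ⟨hx1, hx2⟩
      by_contra hcon; push_neg at hcon
      exact hx2 ⟨hx1, fun ζ hζ => hcon ζ hζ⟩
    choose! zf hzf1 hzf2 using hch
    obtain ⟨T', hT', ζ₀, hζ₀⟩ := h.hnorm zf _ hcpl (fun x hx => (hzf1 x hx).1)
    obtain ⟨x₀, hx₀⟩ := h.huf.inter_nonempty hT' hcpl
    have hζ₀α : ζ₀ < α := by
      have := (hzf1 x₀ hx₀.2).2
      rwa [hζ₀ x₀ hx₀.1] at this
    have hseg := h.seg_mem hζ₀α
    obtain ⟨y, hy⟩ := h.huf.inter_nonempty (h.huf.inter_mem _ hT' _ hcpl) hseg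
    exact (hzf2 y hy.1.2) (hζ₀ y hy.1.1 ▸ hy.2.2)
  refine h.huf.superset_mem _ hTF _ (fun x hx => hx.1) ?_
  rintro x ⟨hx, hdc⟩
  have hbdd : BddAbove ((fun o => o + 1) '' (x ∩ Set.Iio α)) := by
    refine BddAbove.mono (Set.image_subset_iff.2 ?_) (bddAbove_Iio (a := α + 1))
    intro a ha
    have h2 : a < α := ha.2
    simp only [Set.mem_preimage, Set.mem_Iio, Ordinal.add_one_eq_succ]
    exact Order.succ_lt_succ h2
  have hEq : x ∩ Set.Iio α = Set.Iio (axf α x) := by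
    ext β
    constructor
    · intro hβ
      have h1 : β + 1 ≤ axf α x := le_csSup hbdd ⟨β, hβ, rfl⟩
      exact lt_of_lt_of_le (lt_add_one β) h1
    · intro hβ
      rcases Set.eq_empty_or_nonempty (x ∩ Set.Iio α) with he | hne
      · exfalso
        have : axf α x = 0 := by
          simp only [axf, he, Set.image_empty, csSup_empty]
          exact Ordinal.bot_eq_zero
        rw [this] at hβ
        exact absurd hβ (not_lt.2 (zero_le (a := β)))
      · obtain ⟨w, ⟨a, ha, rfl⟩, hβw⟩ := (lt_csSup_iff hbdd (hne.image _)).1 hβ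
        have hβa : β ≤ a := Order.lt_add_one_iff.1 hβw
        rcases eq_or_lt_of_le hβa with rfl | hlt
        · exact ha
        · exact ⟨hdc a ha hlt, hlt.trans ha.2⟩
  exact ⟨hx, hEq, h.lt_alpha_of_seg hx (hEq ▸ Set.inter_subset_left)⟩

end PSetup

/-- The normal ultrafilter on `α` derived from `F` by projecting along `axf`. -/
def dUF (α lam : Ordinal.{0}) (F : Set (Set (Set Ordinal.{0}))) : Set (Set Ordinal.{0}) :=
  {Z | Z ⊆ Set.Iio α ∧ {x | x ∈ Pgood α lam ∧ axf α x ∈ Z} ∈ F}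

namespace PSetup

variable {α lam : Ordinal.{0}} {F : Set (Set (Set Ordinal.{0}))} (h : PSetup α lam F)
include h

theorem ax_gt {β : Ordinal} (hβ : β < α) : {x | x ∈ Pgood α lam ∧ β < axf α x} ∈ F := by
  have h1 := h.fine_mem (lt_of_lt_of_le hβ h.hαlam)
  refine h.huf.superset_mem _ (h.huf.inter_mem _ h.good_mem _ h1) _ (fun x hx => hx.1.1) ?_
  rintro x ⟨hg, hfin⟩
  have h2 : β ∈ x ∩ Set.Iio α := ⟨hfin.2, hβ⟩
  rw [hg.2.1] at h2
  exact ⟨hg, h2⟩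

theorem const_of_regressive {S : Set (Set Ordinal)} (hS : S ∈ F) (hSg : S ⊆ Pgood α lam)
    (k : Set Ordinal → Ordinal) (hk : ∀ x ∈ S, k x < axf α x) :
    ∃ T ∈ F, ∃ β₀, ∀ x ∈ T, k x = β₀ := by
  refine h.hnorm k S hS (fun x hx => ?_)
  have h1 : k x ∈ Set.Iio (axf α x) := hk x hx
  have h2 := (hSg hx).2.1
  rw [← h2] at h1
  exact h1.1

theorem dU_mem_of_superset {E : Set (Set Ordinal)} (hE : E ∈ F) {Z : Set Ordinal}
    (hZ : Z ⊆ Set.Iio α) (hsub : E ⊆ {x | x ∈ Pgood α lam ∧ axf α x ∈ Z}) :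
    Z ∈ dUF α lam F := by
  refine ⟨hZ, h.huf.superset_mem _ hE _ (fun x hx => hx.1.1) hsub⟩

theorem dU_uf : IsUltrafilterOnSet (Set.Iio α) (dUF α lam F) := by
  constructor
  · exact fun Z hZ => hZ.1
  · exact h.dU_mem_of_superset h.good_mem Set.Subset.rfl (fun x hx => ⟨hx, hx.2.2⟩)
  · rintro ⟨-, hmem⟩
    have : {x | x ∈ Pgood α lam ∧ axf α x ∈ (∅ : Set Ordinal)} = ∅ := by
      ext x; simp
    rw [this] at hmem
    exact h.huf.empty_not_mem hmem
  · rintro Z ⟨hZ1, hZ2⟩ Y hY hZY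
    exact ⟨hY, h.huf.superset_mem _ hZ2 _ (fun x hx => hx.1.1)
      (fun x hx => ⟨hx.1, hZY hx.2⟩)⟩
  · rintro Z ⟨hZ1, hZ2⟩ Y ⟨hY1, hY2⟩
    refine ⟨Set.inter_subset_left.trans hZ1, ?_⟩
    refine h.huf.superset_mem _ (h.huf.inter_mem _ hZ2 _ hY2) _ (fun x hx => hx.1.1) ?_
    rintro x ⟨⟨hg, hxZ⟩, ⟨-, hxY⟩⟩
    exact ⟨hg, hxZ, hxY⟩
  · intro Z hZ
    set E := {x | x ∈ Pgood α lam ∧ axf α x ∈ Z} with hE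
    rcases h.huf.mem_or_compl_mem E (fun x hx => hx.1.1) with hEF | hEF
    · exact Or.inl ⟨hZ, hEF⟩
    · refine Or.inr ⟨Set.diff_subset, ?_⟩
      refine h.huf.superset_mem _ (h.huf.inter_mem _ hEF _ h.good_mem) _
        (fun x hx => hx.1.1) ?_
      rintro x ⟨⟨hsp, hnE⟩, hg⟩
      refine ⟨hg, hg.2.2, fun hxZ => hnE ⟨hg, hxZ⟩⟩

theorem dU_cobounded {β : Ordinal} (hβ : β < α) : {γ | β ≤ γ ∧ γ < α} ∈ dUF α lam F := by
  refine h.dU_mem_of_superset (h.ax_gt hβ) (fun γ hγ => hγ.2) ?_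
  rintro x ⟨hg, hlt⟩
  exact ⟨hg, hlt.le, hg.2.2⟩

theorem dU_normal : IsNormalUltrafilterOn α (dUF α lam F) := by
  refine ⟨h.dU_uf, fun β hβ => h.dU_cobounded hβ, ?_⟩
  rintro f S ⟨hS1, hS2⟩ hreg
  have h0 : {x | x ∈ Pgood α lam ∧ (0:Ordinal) < axf α x} ∈ F := h.ax_gt h.alpha_pos
  set S' := {x | x ∈ Pgood α lam ∧ axf α x ∈ S} ∩ {x | x ∈ Pgood α lam ∧ (0:Ordinal) < axf α x}
    with hS'
  have hS'F : S' ∈ F := h.huf.inter_mem _ hS2 _ h0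
  obtain ⟨T, hT, γ₀, hγ₀⟩ := h.const_of_regressive hS'F (fun x hx => hx.1.1)
    (fun x => f (axf α x)) (fun x hx => hreg _ hx.1.2 hx.2.2)
  refine ⟨{β | β < α ∧ f β = γ₀}, ⟨fun β hβ => hβ.1, ?_⟩, γ₀, fun β hβ => hβ.2⟩
  refine h.huf.superset_mem _ (h.huf.inter_mem _ hT _ hS'F) _ (fun x hx => hx.1.1) ?_
  rintro x ⟨hxT, hxS'⟩
  exact ⟨hxS'.1.1, hxS'.1.1.2.2, hγ₀ x hxT⟩

theorem dU_complete : IsComplete α (Set.Iio α) (dUF α lam F) := by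
  intro δ hδ g hg
  have hEi : ∀ i : Set.Iio δ, {x | x ∈ Pgood α lam ∧ axf α x ∈ g i} ∈ F := fun i => (hg i).2
  have hC := h.hcompl δ hδ _ hEi
  refine ⟨Set.inter_subset_left, ?_⟩
  refine h.huf.superset_mem _ (h.huf.inter_mem _ hC _ h.good_mem) _ (fun x hx => hx.1.1) ?_
  rintro x ⟨⟨hsp, hall⟩, hg'⟩
  refine ⟨hg', hg'.2.2, ?_⟩
  refine Set.mem_iInter.2 (fun i => ?_)
  exact (Set.mem_iInter.1 hall i).2

theorem dU_nonprincipal : IsNonprincipal (dUF α lam F) := by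
  intro b hb
  have hbα : b < α := hb.1 rfl
  have h1 : {x | x ∈ Pgood α lam ∧ axf α x ∈ ({b} : Set Ordinal)} ∈ F := hb.2
  obtain ⟨x, hx⟩ := h.huf.inter_nonempty h1 (h.ax_gt hbα)
  have heq : axf α x = b := hx.1.2
  have hlt : b < axf α x := hx.2.2
  rw [heq] at hlt
  exact lt_irrefl b hlt

end PSetup

namespace PSetup

variable {α lam : Ordinal.{0}} {F : Set (Set (Set Ordinal.{0}))} (h : PSetup α lam F)
include h

theorem omega_lt : Ordinal.omega0 < α := by
  rcases lt_trichotomy α Ordinal.omega0 with hlt | heq | hgt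
  · exfalso
    obtain ⟨n, rfl⟩ := Ordinal.lt_omega0.1 hlt
    cases n with
    | zero => exact absurd h.alpha_pos (by simp)
    | succ m =>
      have hcast : ((m + 1 : ℕ) : Ordinal) = (m : Ordinal) + 1 := Nat.cast_succ m
      have hm : (m : Ordinal) < ((m + 1 : ℕ) : Ordinal) := by
        rw [hcast]; exact lt_add_one _
      have hco := h.dU_cobounded hm
      have hsingle : {γ | (m : Ordinal) ≤ γ ∧ γ < ((m+1 : ℕ) : Ordinal)} = {(m : Ordinal)} := by
        ext γ
        simp only [Set.mem_setOf_eq, Set.mem_singleton_iff, hcast]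
        constructor
        · rintro ⟨h1, h2⟩
          exact le_antisymm (Order.lt_add_one_iff.1 h2) h1
        · rintro rfl; exact ⟨le_rfl, lt_add_one _⟩
      rw [hsingle] at hco
      exact h.dU_nonprincipal _ hco
  · exfalso
    have hlim : Order.IsSuccLimit α := by rw [heq]; exact Ordinal.isSuccLimit_omega0
    set f : Ordinal → Ordinal := fun β => sInf {γ | β ≤ γ + 1} with hf
    have hreg : ∀ β ∈ Set.Iio α, 0 < β → f β < β := by
      intro β hβ h0
      have hβω : β < Ordinal.omega0 := by rw [← heq]; exact hβ
      obtain ⟨n, rfl⟩ := Ordinal.lt_omega0.1 hβω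
      cases n with
      | zero => exact absurd h0 (by simp)
      | succ m =>
        have hcast : ((m + 1 : ℕ) : Ordinal) = (m : Ordinal) + 1 := Nat.cast_succ m
        have hmem : (m : Ordinal) ∈ {γ | ((m+1 : ℕ) : Ordinal) ≤ γ + 1} := by
          simp only [Set.mem_setOf_eq, hcast]
          exact le_rfl
        calc f ((m+1 : ℕ) : Ordinal) ≤ (m : Ordinal) := csInf_le' hmem
          _ < ((m+1 : ℕ) : Ordinal) := by rw [hcast]; exact lt_add_one _
    obtain ⟨T, hT, γ₀, hγ₀⟩ := h.dU_normal.2.2 f _ h.dU_uf.univ_mem hreg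
    have h1α : (1 : Ordinal) < α := by rw [heq]; exact Ordinal.one_lt_omega0
    obtain ⟨β₁, hβ₁⟩ := h.dU_uf.inter_nonempty hT (h.dU_cobounded h1α)
    have hγ₀β₁ : γ₀ < β₁ := by
      have := hreg β₁ hβ₁.2.2 (lt_of_lt_of_le zero_lt_one hβ₁.2.1)
      rwa [hγ₀ β₁ hβ₁.1] at this
    have hγ₀α : γ₀ < α := hγ₀β₁.trans hβ₁.2.2
    have hs1 : γ₀ + 1 < α := by
      rw [Ordinal.add_one_eq_succ]; exact hlim.succ_lt hγ₀α
    have hs2 : (γ₀ + 1) + 1 < α := by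
      rw [Ordinal.add_one_eq_succ]; exact hlim.succ_lt hs1
    obtain ⟨β₂, hβ₂⟩ := h.dU_uf.inter_nonempty hT (h.dU_cobounded hs2)
    have hge : γ₀ + 1 ≤ f β₂ := by
      refine le_csInf ⟨β₂, (show β₂ ≤ β₂ + 1 from le_of_lt (lt_add_one β₂))⟩ ?_
      intro γ hγ
      have h2 : (γ₀ + 1) + 1 ≤ γ + 1 := le_trans hβ₂.2.1 hγ
      rw [Ordinal.add_one_eq_succ, Ordinal.add_one_eq_succ, Ordinal.add_one_eq_succ] at h2
      exact Order.succ_le_succ_iff.1 h2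
    rw [hγ₀ β₂ hβ₂.1] at hge
    exact absurd hge (not_le.2 (lt_add_one γ₀))
  · exact hgt

end PSetup

/-! ### Coding subsets of `Iio α` by ordinals below `lam` -/

section
open scoped Classical

/-- A fixed injective coding of the subsets of `Iio α` by ordinals less than `lam`
(when it exists). -/
noncomputable def cfun (α lam : Ordinal.{0}) : Set Ordinal.{0} → Ordinal.{0} :=
  if hn : Nonempty ({Z : Set Ordinal.{0} // Z ⊆ Set.Iio α} ↪ (Set.Iio lam)) then
    fun Z => if hZ : Z ⊆ Set.Iio α then (hn.some ⟨Z, hZ⟩ : Ordinal) else 0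
  else fun _ => 0

theorem cfun_spec {α lam : Ordinal.{0}} (hlam : lam.card = 2 ^ α.card) :
    (∀ Z, Z ⊆ Set.Iio α → cfun α lam Z < lam) ∧
    (∀ Z, Z ⊆ Set.Iio α → ∀ Z', Z' ⊆ Set.Iio α →
      cfun α lam Z = cfun α lam Z' → Z = Z') := by
  have hmk : Cardinal.mk {Z : Set Ordinal.{0} // Z ⊆ Set.Iio α} = Cardinal.mk (Set.Iio lam) := by
    have e1 : {Z : Set Ordinal.{0} // Z ⊆ Set.Iio α} ≃ Set (Set.Iio α) :=
      Equiv.Set.powerset (Set.Iio α)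
    rw [Cardinal.mk_congr e1, Cardinal.mk_set, Ordinal.mk_Iio_ordinal, Ordinal.mk_Iio_ordinal,
      ← Cardinal.lift_two_power, hlam]
  have hn : Nonempty ({Z : Set Ordinal.{0} // Z ⊆ Set.Iio α} ↪ (Set.Iio lam)) :=
    ⟨(Cardinal.eq.1 hmk).some.toEmbedding⟩
  constructor
  · intro Z hZ
    rw [cfun]
    rw [dif_pos hn, dif_pos hZ]
    exact (hn.some ⟨Z, hZ⟩).2
  · intro Z hZ Z' hZ' heq
    rw [cfun] at heq
    rw [dif_pos hn, dif_pos hZ, dif_pos hZ'] at heq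
    have := hn.some.injective (Subtype.ext heq)
    exact Subtype.ext_iff.1 this

end

/-- The pointwise collapsed measure `u_x` on `Iio (axf α x)`. -/
def ux (α lam : Ordinal.{0}) (F : Set (Set (Set Ordinal.{0}))) (x : Set Ordinal.{0}) :
    Set (Set Ordinal.{0}) :=
  {W | W ⊆ Set.Iio (axf α x) ∧ ∃ Z, Z ⊆ Set.Iio α ∧ cfun α lam Z ∈ x ∧
    Z ∩ Set.Iio (axf α x) = W ∧ Z ∈ dUF α lam F}

namespace PSetup

variable {α lam : Ordinal.{0}} {F : Set (Set (Set Ordinal.{0}))} (h : PSetup α lam F)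
include h

/-- Every `x`-indexed family of subsets of `Iio (axf α x)` is, almost everywhere,
the trace of a single fixed subset of `Iio α`. -/
theorem completion {S : Set (Set Ordinal)} (hS : S ∈ F) (hSg : S ⊆ Pgood α lam)
    (w : Set Ordinal → Set Ordinal) (hw : ∀ x ∈ S, w x ⊆ Set.Iio (axf α x)) :
    ∃ Wb, Wb ⊆ Set.Iio α ∧ {x | x ∈ S ∧ w x = Wb ∩ Set.Iio (axf α x)} ∈ F := by
  set Wb := {β | β < α ∧ {x | x ∈ S ∧ β ∈ w x} ∈ F} with hWbdef
  refine ⟨Wb, fun β hβ => hβ.1, ?_⟩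
  by_contra hnot
  have htsub : {x | x ∈ S ∧ w x = Wb ∩ Set.Iio (axf α x)} ⊆ sP α lam :=
    fun x hx => (hSg hx.1).1
  have hbad0 : sP α lam \ {x | x ∈ S ∧ w x = Wb ∩ Set.Iio (axf α x)} ∈ F :=
    h.huf.compl_mem_of_not_mem htsub hnot
  set bad := S ∩ (sP α lam \ {x | x ∈ S ∧ w x = Wb ∩ Set.Iio (axf α x)}) with hbaddef
  have hbadF : bad ∈ F := h.huf.inter_mem _ hS _ hbad0
  have hbadsub : bad ⊆ Pgood α lam := fun x hx => hSg hx.1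
  have hne : ∀ x ∈ bad,
      ((w x \ (Wb ∩ Set.Iio (axf α x))) ∪ ((Wb ∩ Set.Iio (axf α x)) \ w x)).Nonempty := by
    rintro x ⟨hxS, -, hxne⟩
    have hneq : w x ≠ Wb ∩ Set.Iio (axf α x) := fun hcon => hxne ⟨hxS, hcon⟩
    by_contra hempty
    rw [Set.not_nonempty_iff_eq_empty, Set.union_empty_iff] at hempty
    exact hneq (Set.Subset.antisymm (Set.diff_eq_empty.1 hempty.1) (Set.diff_eq_empty.1 hempty.2))
  set k : Set Ordinal → Ordinal := fun x =>
    sInf ((w x \ (Wb ∩ Set.Iio (axf α x))) ∪ ((Wb ∩ Set.Iio (axf α x)) \ w x)) with hkdef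
  have hkmem : ∀ x ∈ bad,
      k x ∈ (w x \ (Wb ∩ Set.Iio (axf α x))) ∪ ((Wb ∩ Set.Iio (axf α x)) \ w x) :=
    fun x hx => csInf_mem (hne x hx)
  have hklt : ∀ x ∈ bad, k x < axf α x := by
    intro x hx
    rcases hkmem x hx with ⟨h1, -⟩ | ⟨h1, -⟩
    · exact hw x hx.1 h1
    · exact h1.2
  obtain ⟨T, hT, β₀, hβ₀⟩ := h.const_of_regressive hbadF hbadsub k hklt
  by_cases hc : {x | x ∈ S ∧ β₀ ∈ w x} ∈ F
  · obtain ⟨x, hx⟩ := h.huf.inter_nonempty (h.huf.inter_mem _ hT _ hbadF) hc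
    have hkx := hkmem x hx.1.2
    have hklt' := hklt x hx.1.2
    rw [hβ₀ x hx.1.1] at hkx hklt'
    have hβ₀α : β₀ < α := hklt'.trans (hbadsub hx.1.2).2.2
    have hβ₀Wb : β₀ ∈ Wb := ⟨hβ₀α, hc⟩
    rcases hkx with ⟨-, h2⟩ | ⟨-, h2⟩
    · exact h2 ⟨hβ₀Wb, hklt'⟩
    · exact h2 hx.2.2
  · have hcsub : {x | x ∈ S ∧ β₀ ∈ w x} ⊆ sP α lam := fun x hx => (hSg hx.1).1
    have hcomp := h.huf.compl_mem_of_not_mem hcsub hc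
    obtain ⟨x, hx⟩ := h.huf.inter_nonempty (h.huf.inter_mem _ hT _ hbadF) hcomp
    have hkx := hkmem x hx.1.2
    rw [hβ₀ x hx.1.1] at hkx
    have hxS : x ∈ S := hx.1.2.1
    have hnw : β₀ ∉ w x := fun hcon => hx.2.2 ⟨hxS, hcon⟩
    rcases hkx with ⟨h1, -⟩ | ⟨h1, -⟩
    · exact hnw h1
    · exact hc h1.1.2

/-- An `x`-indexed family of coded subsets of `Iio α` is a.e. constant. -/
theorem code_const (hlam : lam.card = 2 ^ α.card) {S : Set (Set Ordinal)} (hS : S ∈ F)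
    (Zf : Set Ordinal → Set Ordinal) (hZ1 : ∀ x ∈ S, Zf x ⊆ Set.Iio α)
    (hZ2 : ∀ x ∈ S, cfun α lam (Zf x) ∈ x) :
    ∃ T, T ∈ F ∧ T ⊆ S ∧ ∃ Z₁, Z₁ ⊆ Set.Iio α ∧ ∀ x ∈ T, Zf x = Z₁ := by
  obtain ⟨T₀, hT₀, ζ₀, hζ₀⟩ := h.hnorm (fun x => cfun α lam (Zf x)) S hS hZ2
  have hTF : T₀ ∩ S ∈ F := h.huf.inter_mem _ hT₀ _ hS
  obtain ⟨x₀, hx₀⟩ := h.huf.nonempty_of_mem hTF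
  refine ⟨T₀ ∩ S, hTF, Set.inter_subset_right, Zf x₀, hZ1 x₀ hx₀.2, ?_⟩
  intro x hx
  have e1 : cfun α lam (Zf x) = ζ₀ := hζ₀ x hx.1
  have e2 : cfun α lam (Zf x₀) = ζ₀ := hζ₀ x₀ hx₀.1
  exact (cfun_spec hlam).2 _ (hZ1 x hx.2) _ (hZ1 x₀ hx₀.2) (e1.trans e2.symm)

/-- The trace of a fixed coded `dU`-large set is a.e. in `u_x`. -/
theorem trace_mem (hlam : lam.card = 2 ^ α.card) {Z : Set Ordinal} (hZ : Z ⊆ Set.Iio α)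
    (hZU : Z ∈ dUF α lam F) :
    {x | x ∈ Pgood α lam ∧ Z ∩ Set.Iio (axf α x) ∈ ux α lam F x} ∈ F := by
  have hfin := h.fine_mem ((cfun_spec hlam).1 Z hZ)
  refine h.huf.superset_mem _ (h.huf.inter_mem _ h.good_mem _ hfin) _ (fun x hx => hx.1.1) ?_
  rintro x ⟨hg, -, hcx⟩
  exact ⟨hg, Set.inter_subset_right, Z, hZ, hcx, rfl, hZU⟩

end PSetup

namespace PSetup

variable {α lam : Ordinal.{0}} {F : Set (Set (Set Ordinal.{0}))} (h : PSetup α lam F)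
include h

theorem alpha_limit : Order.IsSuccLimit α := by
  have h1 : Cardinal.aleph0 ≤ α.card := by
    rw [← Ordinal.card_omega0]; exact Ordinal.card_le_card h.omega_lt.le
  have h2 := Cardinal.isSuccLimit_ord h1
  rwa [h.hcard] at h2

theorem bad_of_not_ae {P : Set Ordinal → Prop}
    (hnot : {x | x ∈ Pgood α lam ∧ P x} ∉ F) :
    {x | x ∈ Pgood α lam ∧ ¬ P x} ∈ F := by
  have hsub : {x | x ∈ Pgood α lam ∧ P x} ⊆ sP α lam := fun x hx => hx.1.1
  have hcomp := h.huf.compl_mem_of_not_mem hsub hnot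
  refine h.huf.superset_mem _ (h.huf.inter_mem _ hcomp _ h.good_mem) _ (fun x hx => hx.1.1) ?_
  rintro x ⟨⟨hsp, hn⟩, hg⟩
  exact ⟨hg, fun hP => hn ⟨hg, hP⟩⟩

theorem ae_univ (hlam : lam.card = 2 ^ α.card) :
    {x | x ∈ Pgood α lam ∧ Set.Iio (axf α x) ∈ ux α lam F x} ∈ F := by
  have h1 := h.trace_mem hlam (Set.Subset.rfl : Set.Iio α ⊆ Set.Iio α) h.dU_uf.univ_mem
  refine h.huf.superset_mem _ h1 _ (fun x hx => hx.1.1) ?_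
  rintro x ⟨hg, hm⟩
  have heq : Set.Iio α ∩ Set.Iio (axf α x) = Set.Iio (axf α x) := by
    rw [Set.inter_eq_right]
    exact fun γ hγ => lt_trans hγ hg.2.2
  rw [heq] at hm
  exact ⟨hg, hm⟩

theorem ae_empty (hlam : lam.card = 2 ^ α.card) :
    {x | x ∈ Pgood α lam ∧ (∅ : Set Ordinal) ∉ ux α lam F x} ∈ F := by
  by_contra hnot
  have hbad := h.bad_of_not_ae hnot
  have hch : ∀ x ∈ {x | x ∈ Pgood α lam ∧ ¬ (∅ : Set Ordinal) ∉ ux α lam F x},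
      ∃ Z, Z ⊆ Set.Iio α ∧ cfun α lam Z ∈ x ∧ Z ∩ Set.Iio (axf α x) = ∅ ∧ Z ∈ dUF α lam F := by
    rintro x ⟨hg, hxx⟩
    obtain ⟨-, Z, hZ1, hZ2, hZ3, hZ4⟩ := not_not.1 hxx
    exact ⟨Z, hZ1, hZ2, hZ3, hZ4⟩
  choose! Zf hZf1 hZf2 hZf3 hZf4 using hch
  obtain ⟨T, hTF, hTsub, Z₁, hZ₁, hconst⟩ := h.code_const hlam hbad Zf hZf1 hZf2
  obtain ⟨x₁, hx₁⟩ := h.huf.nonempty_of_mem hTF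
  have hZ₁U : Z₁ ∈ dUF α lam F := hconst x₁ hx₁ ▸ hZf4 x₁ (hTsub hx₁)
  obtain ⟨β, hβ⟩ := h.dU_uf.nonempty_of_mem hZ₁U
  have hβα : β < α := hZ₁ hβ
  obtain ⟨x, hx⟩ := h.huf.inter_nonempty hTF (h.ax_gt hβα)
  have htr : Z₁ ∩ Set.Iio (axf α x) = ∅ := hconst x hx.1 ▸ hZf3 x (hTsub hx.1)
  have : β ∈ Z₁ ∩ Set.Iio (axf α x) := ⟨hβ, hx.2.2⟩
  rw [htr] at this
  exact this

theorem ae_ultra (hlam : lam.card = 2 ^ α.card) :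
    {x | x ∈ Pgood α lam ∧ ∀ W, W ⊆ Set.Iio (axf α x) →
      (W ∈ ux α lam F x ∨ (Set.Iio (axf α x) \ W) ∈ ux α lam F x)} ∈ F := by
  by_contra hnot
  have hbad := h.bad_of_not_ae hnot
  have hch : ∀ x ∈ {x | x ∈ Pgood α lam ∧
      ¬ (∀ W, W ⊆ Set.Iio (axf α x) →
        (W ∈ ux α lam F x ∨ (Set.Iio (axf α x) \ W) ∈ ux α lam F x))},
      ∃ W, W ⊆ Set.Iio (axf α x) ∧ W ∉ ux α lam F x ∧
        (Set.Iio (axf α x) \ W) ∉ ux α lam F x := by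
    rintro x ⟨hg, hxx⟩
    push_neg at hxx
    obtain ⟨W, hW1, hW2⟩ := hxx
    exact ⟨W, hW1, hW2.1, hW2.2⟩
  choose! wf hwf1 hwf2 hwf3 using hch
  have hbadsub : {x | x ∈ Pgood α lam ∧
      ¬ (∀ W, W ⊆ Set.Iio (axf α x) →
        (W ∈ ux α lam F x ∨ (Set.Iio (axf α x) \ W) ∈ ux α lam F x))} ⊆ Pgood α lam :=
    fun x hx => hx.1
  obtain ⟨Wb, hWbsub, hE⟩ := h.completion hbad hbadsub wf hwf1
  rcases h.dU_uf.mem_or_compl_mem Wb hWbsub with hU | hU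
  · obtain ⟨x, hx⟩ := h.huf.inter_nonempty hE (h.trace_mem hlam hWbsub hU)
    exact hwf2 x hx.1.1 (hx.1.2 ▸ hx.2.2)
  · obtain ⟨x, hx⟩ := h.huf.inter_nonempty hE (h.trace_mem hlam Set.diff_subset hU)
    have hgx : x ∈ Pgood α lam := hx.1.1.1
    have heq : (Set.Iio α \ Wb) ∩ Set.Iio (axf α x) =
        Set.Iio (axf α x) \ wf x := by
      rw [hx.1.2]
      ext z
      simp only [Set.mem_inter_iff, Set.mem_diff, Set.mem_Iio]
      constructor
      · rintro ⟨⟨hz1, hz2⟩, hz3⟩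
        exact ⟨hz3, fun hc => hz2 hc.1⟩
      · rintro ⟨hz1, hz2⟩
        exact ⟨⟨hz1.trans hgx.2.2, fun hc => hz2 ⟨hc, hz1⟩⟩, hz1⟩
    have := hx.2.2
    rw [heq] at this
    exact hwf3 x hx.1.1 this

theorem ae_superset (hlam : lam.card = 2 ^ α.card) :
    {x | x ∈ Pgood α lam ∧ ∀ W ∈ ux α lam F x, ∀ Y, Y ⊆ Set.Iio (axf α x) → W ⊆ Y →
      Y ∈ ux α lam F x} ∈ F := by
  by_contra hnot
  have hbad := h.bad_of_not_ae hnot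
  have hch : ∀ x ∈ {x | x ∈ Pgood α lam ∧
      ¬ (∀ W ∈ ux α lam F x, ∀ Y, Y ⊆ Set.Iio (axf α x) → W ⊆ Y → Y ∈ ux α lam F x)},
      ∃ W Y, W ∈ ux α lam F x ∧ Y ⊆ Set.Iio (axf α x) ∧ W ⊆ Y ∧ Y ∉ ux α lam F x := by
    rintro x ⟨hg, hxx⟩
    push_neg at hxx
    obtain ⟨W, hW, Y, hY1, hY2, hY3⟩ := hxx
    exact ⟨W, Y, hW, hY1, hY2, hY3⟩
  choose! wf yf hwf hyf1 hyf2 hyf3 using hch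
  set B := {x | x ∈ Pgood α lam ∧
      ¬ (∀ W ∈ ux α lam F x, ∀ Y, Y ⊆ Set.Iio (axf α x) → W ⊆ Y → Y ∈ ux α lam F x)} with hBdef
  have hchZ : ∀ x ∈ B, ∃ Z, Z ⊆ Set.Iio α ∧ cfun α lam Z ∈ x ∧
      Z ∩ Set.Iio (axf α x) = wf x ∧ Z ∈ dUF α lam F := by
    intro x hx
    obtain ⟨-, Z, hZ1, hZ2, hZ3, hZ4⟩ := hwf x hx
    exact ⟨Z, hZ1, hZ2, hZ3, hZ4⟩
  choose! Zf hZf1 hZf2 hZf3 hZf4 using hchZ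
  obtain ⟨T, hTF, hTsub, Z₁, hZ₁, hconst⟩ := h.code_const hlam hbad Zf hZf1 hZf2
  obtain ⟨x₁, hx₁⟩ := h.huf.nonempty_of_mem hTF
  have hZ₁U : Z₁ ∈ dUF α lam F := hconst x₁ hx₁ ▸ hZf4 x₁ (hTsub hx₁)
  obtain ⟨Yb, hYbsub, hE⟩ := h.completion hTF (hTsub.trans (fun x hx => hx.1)) yf
    (fun x hx => hyf1 x (hTsub hx))
  have hbig : Yb ∪ Z₁ ∈ dUF α lam F :=
    h.dU_uf.superset_mem _ hZ₁U _ (Set.union_subset hYbsub hZ₁) Set.subset_union_right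
  obtain ⟨x, hx⟩ := h.huf.inter_nonempty hE
    (h.trace_mem hlam (Set.union_subset hYbsub hZ₁) hbig)
  have hxT : x ∈ T := hx.1.1
  have hxB : x ∈ B := hTsub hxT
  have htr : (Yb ∪ Z₁) ∩ Set.Iio (axf α x) = yf x := by
    rw [Set.union_inter_distrib_right]
    have e1 : Z₁ ∩ Set.Iio (axf α x) = wf x := by
      rw [← hconst x hxT]; exact hZf3 x hxB
    have e2 : Yb ∩ Set.Iio (axf α x) = yf x := hx.1.2.symm
    rw [e1, e2]
    exact Set.union_eq_left.2 (hyf2 x hxB)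
  have := hx.2.2
  rw [htr] at this
  exact hyf3 x hxB this

theorem ae_inter (hlam : lam.card = 2 ^ α.card) :
    {x | x ∈ Pgood α lam ∧ ∀ W ∈ ux α lam F x, ∀ W' ∈ ux α lam F x,
      W ∩ W' ∈ ux α lam F x} ∈ F := by
  by_contra hnot
  have hbad := h.bad_of_not_ae hnot
  set B := {x | x ∈ Pgood α lam ∧
      ¬ (∀ W ∈ ux α lam F x, ∀ W' ∈ ux α lam F x, W ∩ W' ∈ ux α lam F x)} with hBdef
  have hch : ∀ x ∈ B, ∃ W W', W ∈ ux α lam F x ∧ W' ∈ ux α lam F x ∧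
      W ∩ W' ∉ ux α lam F x := by
    rintro x ⟨hg, hxx⟩
    push_neg at hxx
    obtain ⟨W, hW, W', hW', hWW'⟩ := hxx
    exact ⟨W, W', hW, hW', hWW'⟩
  choose! wf w'f hwf hw'f hmix using hch
  have hchZ : ∀ x ∈ B, ∃ Z, Z ⊆ Set.Iio α ∧ cfun α lam Z ∈ x ∧
      Z ∩ Set.Iio (axf α x) = wf x ∧ Z ∈ dUF α lam F := by
    intro x hx
    obtain ⟨-, Z, hZ1, hZ2, hZ3, hZ4⟩ := hwf x hx
    exact ⟨Z, hZ1, hZ2, hZ3, hZ4⟩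
  choose! Zf hZf1 hZf2 hZf3 hZf4 using hchZ
  have hchZ' : ∀ x ∈ B, ∃ Z, Z ⊆ Set.Iio α ∧ cfun α lam Z ∈ x ∧
      Z ∩ Set.Iio (axf α x) = w'f x ∧ Z ∈ dUF α lam F := by
    intro x hx
    obtain ⟨-, Z, hZ1, hZ2, hZ3, hZ4⟩ := hw'f x hx
    exact ⟨Z, hZ1, hZ2, hZ3, hZ4⟩
  choose! Z'f hZ'f1 hZ'f2 hZ'f3 hZ'f4 using hchZ'
  obtain ⟨T, hTF, hTsub, Z₁, hZ₁, hconst⟩ := h.code_const hlam hbad Zf hZf1 hZf2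
  obtain ⟨T', hT'F, hT'sub, Z₂, hZ₂, hconst'⟩ := h.code_const hlam hTF
    (fun x => Z'f x) (fun x hx => hZ'f1 x (hTsub hx)) (fun x hx => hZ'f2 x (hTsub hx))
  obtain ⟨x₁, hx₁⟩ := h.huf.nonempty_of_mem hT'F
  have hx₁T : x₁ ∈ T := hT'sub hx₁
  have hx₁B : x₁ ∈ B := hTsub hx₁T
  have hZ₁U : Z₁ ∈ dUF α lam F := hconst x₁ hx₁T ▸ hZf4 x₁ hx₁B
  have hZ₂U : Z₂ ∈ dUF α lam F := hconst' x₁ hx₁ ▸ hZ'f4 x₁ hx₁B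
  have hiU : Z₁ ∩ Z₂ ∈ dUF α lam F := h.dU_uf.inter_mem _ hZ₁U _ hZ₂U
  obtain ⟨x, hx⟩ := h.huf.inter_nonempty hT'F
    (h.trace_mem hlam (Set.inter_subset_left.trans hZ₁) hiU)
  have hxT : x ∈ T := hT'sub hx.1
  have hxB : x ∈ B := hTsub hxT
  have htr : (Z₁ ∩ Z₂) ∩ Set.Iio (axf α x) = wf x ∩ w'f x := by
    rw [Set.inter_inter_distrib_right, ← hconst x hxT, ← hconst' x hx.1,
      hZf3 x hxB, hZ'f3 x hxB]
  have := hx.2.2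
  rw [htr] at this
  exact hmix x hxB this

theorem ae_nonpr (hlam : lam.card = 2 ^ α.card) :
    {x | x ∈ Pgood α lam ∧ ∀ b, {b} ∉ ux α lam F x} ∈ F := by
  by_contra hnot
  have hbad := h.bad_of_not_ae hnot
  set B := {x | x ∈ Pgood α lam ∧ ¬ ∀ (b : Ordinal), {b} ∉ ux α lam F x} with hBdef
  have hch : ∀ x ∈ B, ∃ b : Ordinal, {b} ∈ ux α lam F x := by
    rintro x ⟨hg, hxx⟩
    push_neg at hxx
    obtain ⟨b, hb⟩ := hxx
    exact ⟨b, hb⟩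
  choose! bf hbf using hch
  have hblt : ∀ x ∈ B, bf x < axf α x := fun x hx => (hbf x hx).1 rfl
  obtain ⟨T₀, hT₀, β₀, hβ₀⟩ := h.const_of_regressive hbad (fun x hx => hx.1) bf hblt
  have hTF : T₀ ∩ B ∈ F := h.huf.inter_mem _ hT₀ _ hbad
  have hchZ : ∀ x ∈ T₀ ∩ B, ∃ Z, Z ⊆ Set.Iio α ∧ cfun α lam Z ∈ x ∧
      Z ∩ Set.Iio (axf α x) = {β₀} ∧ Z ∈ dUF α lam F := by
    rintro x ⟨hxT, hxB⟩
    obtain ⟨-, Z, hZ1, hZ2, hZ3, hZ4⟩ := hbf x hxB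
    refine ⟨Z, hZ1, hZ2, ?_, hZ4⟩
    rw [hZ3, hβ₀ x hxT]
  choose! Zf hZf1 hZf2 hZf3 hZf4 using hchZ
  obtain ⟨T, hTF2, hTsub, Z₁, hZ₁, hconst⟩ := h.code_const hlam hTF Zf hZf1 hZf2
  obtain ⟨x₁, hx₁⟩ := h.huf.nonempty_of_mem hTF2
  have hZ₁U : Z₁ ∈ dUF α lam F := hconst x₁ hx₁ ▸ hZf4 x₁ (hTsub hx₁)
  have hβ₀α : β₀ < α := by
    have h1 := hblt x₁ (hTsub hx₁).2
    rw [hβ₀ x₁ (hTsub hx₁).1] at h1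
    exact h1.trans (hTsub hx₁).2.1.2.2
  have hsucc : β₀ + 1 < α := by
    rw [Ordinal.add_one_eq_succ]; exact h.alpha_limit.succ_lt hβ₀α
  obtain ⟨a, ha⟩ := h.dU_uf.inter_nonempty hZ₁U (h.dU_cobounded hsucc)
  have haα : a < α := ha.2.2
  obtain ⟨x, hx⟩ := h.huf.inter_nonempty hTF2 (h.ax_gt haα)
  have htr : Z₁ ∩ Set.Iio (axf α x) = {β₀} := by
    rw [← hconst x hx.1]; exact hZf3 x (hTsub hx.1)
  have hmem : a ∈ Z₁ ∩ Set.Iio (axf α x) := ⟨ha.1, hx.2.2⟩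
  rw [htr] at hmem
  have heqa : a = β₀ := hmem
  rw [heqa] at ha
  exact absurd ha.2.1 (not_le.2 (lt_add_one β₀))

end PSetup

namespace PSetup

variable {α lam : Ordinal.{0}} {F : Set (Set (Set Ordinal.{0}))} (h : PSetup α lam F)
include h

theorem ae_card : {x | x ∈ Pgood α lam ∧ IsCard (axf α x)} ∈ F := by
  classical
  by_contra hnot
  have hbad := h.bad_of_not_ae hnot
  set B := {x | x ∈ Pgood α lam ∧ ¬ IsCard (axf α x)} with hBdef
  have hblt : ∀ x ∈ B, (axf α x).card.ord < axf α x := by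
    intro x hx
    exact lt_of_le_of_ne (Cardinal.ord_card_le _) hx.2
  obtain ⟨T₀, hT₀, β₀, hβ₀⟩ := h.const_of_regressive hbad (fun x hx => hx.1)
    (fun x => (axf α x).card.ord) hblt
  set S₁ := T₀ ∩ B with hS₁def
  have hS₁F : S₁ ∈ F := h.huf.inter_mem _ hT₀ _ hbad
  obtain ⟨x₂, hx₂⟩ := h.huf.nonempty_of_mem hS₁F
  have hβx : ∀ x ∈ S₁, β₀ < axf α x := by
    intro x hx
    have h1 := hblt x hx.2
    rwa [hβ₀ x hx.1] at h1
  have hβ₀α : β₀ < α := (hβx x₂ hx₂).trans hx₂.2.1.2.2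
  have hcards : ∀ x ∈ S₁, (axf α x).card = β₀.card := by
    intro x hx
    rw [← hβ₀ x hx.1, Cardinal.card_ord]
  have hembch : ∀ x ∈ S₁, ∃ e : Ordinal → Ordinal,
      (∀ γ < axf α x, e γ < β₀) ∧ Set.InjOn e (Set.Iio (axf α x)) := by
    intro x hx
    have hmk : Cardinal.mk (Set.Iio (axf α x)) = Cardinal.mk (Set.Iio β₀) := by
      rw [Ordinal.mk_Iio_ordinal, Ordinal.mk_Iio_ordinal, hcards x hx]
    obtain ⟨em⟩ := Cardinal.eq.1 hmk
    refine ⟨fun γ => if hγ : γ < axf α x then (em ⟨γ, hγ⟩ : Ordinal) else 0, ?_, ?_⟩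
    · intro γ hγ
      have hgoal : (if h1 : γ < axf α x then ((em ⟨γ, h1⟩ : (Set.Iio β₀)) : Ordinal) else 0)
          < β₀ := by
        rw [dif_pos hγ]; exact (em ⟨γ, hγ⟩).2
      exact hgoal
    · intro γ hγ γ' hγ' heq
      have heq' : (if h1 : γ < axf α x then ((em ⟨γ, h1⟩ : (Set.Iio β₀)) : Ordinal) else 0)
          = (if h2 : γ' < axf α x then ((em ⟨γ', h2⟩ : (Set.Iio β₀)) : Ordinal) else 0) := heq
      rw [dif_pos (Set.mem_Iio.1 hγ), dif_pos (Set.mem_Iio.1 hγ')] at heq'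
      exact Subtype.ext_iff.1 (em.injective (Subtype.ext heq'))
  choose! ef hef1 hef2 using hembch
  have hq : ∀ γ : Ordinal, γ < α → ∃ q : Ordinal, q < β₀ ∧ ∃ T, T ∈ F ∧ T ⊆ S₁ ∧
      (∀ x ∈ T, γ < axf α x) ∧ ∀ x ∈ T, ef x γ = q := by
    intro γ hγ
    have hSγF : S₁ ∩ {x | x ∈ Pgood α lam ∧ γ < axf α x} ∈ F :=
      h.huf.inter_mem _ hS₁F _ (h.ax_gt hγ)
    obtain ⟨T, hT, q, hqc⟩ := h.const_of_regressive hSγF (fun x hx => hx.2.1)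
      (fun x => ef x γ) (fun x hx => lt_trans (hef1 x hx.1 γ hx.2.2) (hβx x hx.1))
    have hT'F : T ∩ (S₁ ∩ {x | x ∈ Pgood α lam ∧ γ < axf α x}) ∈ F :=
      h.huf.inter_mem _ hT _ hSγF
    obtain ⟨x₃, hx₃⟩ := h.huf.nonempty_of_mem hT'F
    refine ⟨q, ?_, _, hT'F, fun x hx => hx.2.1, fun x hx => hx.2.2.2, fun x hx => hqc x hx.1⟩
    rw [← hqc x₃ hx₃.1]
    exact hef1 x₃ hx₃.2.1 γ hx₃.2.2.2
  choose! qf hqf1 Tf hTf1 hTf2 hTf3 hqf2 using hq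
  have hinj : ∀ γ γ', γ < α → γ' < α → γ ≠ γ' → qf γ ≠ qf γ' := by
    intro γ γ' hγ hγ' hne heq
    obtain ⟨x, hx⟩ := h.huf.inter_nonempty (hTf1 γ hγ) (hTf1 γ' hγ')
    have e1 : ef x γ = qf γ := hqf2 γ hγ x hx.1
    have e2 : ef x γ' = qf γ' := hqf2 γ' hγ' x hx.2
    have hxS₁ : x ∈ S₁ := hTf2 γ hγ hx.1
    refine hne (hef2 x hxS₁ ?_ ?_ (by rw [e1, e2, heq]))
    · exact Set.mem_Iio.2 (hTf3 γ hγ x hx.1)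
    · exact Set.mem_Iio.2 (hTf3 γ' hγ' x hx.2)
  have hembinj : Function.Injective
      (fun γ : (Set.Iio α) => (⟨qf γ.1, hqf1 γ.1 γ.2⟩ : (Set.Iio β₀))) := by
    intro γ γ' heq
    by_contra hne
    exact hinj γ.1 γ'.1 γ.2 γ'.2 (fun hc => hne (Subtype.ext hc)) (Subtype.ext_iff.1 heq)
  have hle : Cardinal.mk (Set.Iio α) ≤ Cardinal.mk (Set.Iio β₀) :=
    Cardinal.mk_le_of_injective hembinj
  rw [Ordinal.mk_Iio_ordinal, Ordinal.mk_Iio_ordinal, Cardinal.lift_le] at hle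
  have hlt : β₀.card < α.card := by
    have h2 := hβ₀α
    rw [← h.hcard] at h2
    exact Cardinal.lt_ord.1 h2
  exact absurd hle (not_le.2 hlt)

theorem ae_complete (hlam : lam.card = 2 ^ α.card) :
    {x | x ∈ Pgood α lam ∧ IsComplete (axf α x) (Set.Iio (axf α x)) (ux α lam F x)} ∈ F := by
  classical
  by_contra hnot
  have hbad := h.bad_of_not_ae hnot
  set B := {x | x ∈ Pgood α lam ∧
    ¬ IsComplete (axf α x) (Set.Iio (axf α x)) (ux α lam F x)} with hBdef
  have hch : ∀ x ∈ B, ∃ δ, δ < axf α x ∧ ∃ G : Ordinal → Set Ordinal,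
      (∀ o, o < δ → G o ∈ ux α lam F x) ∧
      (Set.Iio (axf α x) ∩ ⋂ o : (Set.Iio δ), G o.1) ∉ ux α lam F x := by
    rintro x ⟨hg, hxx⟩
    rw [IsComplete] at hxx
    push_neg at hxx
    obtain ⟨δ, hδ, g, hg1, hg2⟩ := hxx
    refine ⟨δ, hδ, fun o => if ho : o < δ then g ⟨o, ho⟩ else ∅, ?_, ?_⟩
    · intro o ho
      have hgoal : (if ho' : o < δ then g ⟨o, ho'⟩ else ∅) ∈ ux α lam F x := by
        rw [dif_pos ho]; exact hg1 _
      exact hgoal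
    · have hEq : (⋂ o : (Set.Iio δ),
          (fun o' => if ho : o' < δ then g ⟨o', ho⟩ else ∅) o.1) = ⋂ i, g i := by
        ext z
        simp only [Set.mem_iInter]
        constructor
        · intro hz i
          have h1 := hz i
          rwa [dif_pos (show (i : Ordinal) < δ from i.2)] at h1
        · intro hz o
          rw [dif_pos (show (o : Ordinal) < δ from o.2)]
          exact hz ⟨o.1, o.2⟩
      rw [hEq]
      exact hg2
  choose! δf hδf Gf hGf1 hGf2 using hch
  obtain ⟨T₀, hT₀, δ₀, hδ₀c⟩ := h.const_of_regressive hbad (fun x hx => hx.1) δf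
    (fun x hx => hδf x hx)
  set S₀ := T₀ ∩ B with hS₀def
  have hS₀F : S₀ ∈ F := h.huf.inter_mem _ hT₀ _ hbad
  obtain ⟨x₂, hx₂⟩ := h.huf.nonempty_of_mem hS₀F
  have hδ₀α : δ₀ < α := by
    have h1 := hδf x₂ hx₂.2
    rw [hδ₀c x₂ hx₂.1] at h1
    exact h1.trans hx₂.2.1.2.2
  have hkey : ∀ i : (Set.Iio δ₀), ∃ T, T ∈ F ∧ T ⊆ S₀ ∧ ∃ Z, Z ⊆ Set.Iio α ∧
      Z ∈ dUF α lam F ∧ ∀ x ∈ T, Z ∩ Set.Iio (axf α x) = Gf x i.1 := by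
    intro i
    have hchZ : ∀ x ∈ S₀, ∃ Z, Z ⊆ Set.Iio α ∧ cfun α lam Z ∈ x ∧
        Z ∩ Set.Iio (axf α x) = Gf x i.1 ∧ Z ∈ dUF α lam F := by
      rintro x ⟨hxT, hxB⟩
      have hiδ : (i : Ordinal) < δf x := by rw [hδ₀c x hxT]; exact i.2
      obtain ⟨hWsub, Z, hZ1, hZ2, hZ3, hZ4⟩ := hGf1 x hxB i.1 hiδ
      exact ⟨Z, hZ1, hZ2, hZ3, hZ4⟩
    choose! Zf hZf1 hZf2 hZf3 hZf4 using hchZ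
    obtain ⟨T, hTF, hTsub, Z₁, hZ₁sub, hconst⟩ := h.code_const hlam hS₀F Zf hZf1 hZf2
    obtain ⟨x₁, hx₁⟩ := h.huf.nonempty_of_mem hTF
    refine ⟨T, hTF, hTsub, Z₁, hZ₁sub, hconst x₁ hx₁ ▸ hZf4 x₁ (hTsub hx₁), ?_⟩
    intro x hx
    rw [← hconst x hx]
    exact hZf3 x (hTsub hx)
  choose Tf hTf1 hTf2 Zc hZc1 hZc2 hZc3 using hkey
  have hT₁ := h.hcompl δ₀ hδ₀α Tf hTf1
  have hZZ : (Set.Iio α ∩ ⋂ i, Zc i) ∈ dUF α lam F := h.dU_complete δ₀ hδ₀α Zc hZc2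
  obtain ⟨x, hx⟩ := h.huf.inter_nonempty (h.huf.inter_mem _ hS₀F _ hT₁)
    (h.trace_mem hlam (Set.inter_subset_left) hZZ)
  obtain ⟨⟨hxS₀, hxT₁⟩, -, hxtr⟩ := hx
  have hgx : x ∈ Pgood α lam := hxS₀.2.1
  have haxα : axf α x < α := hgx.2.2
  have hδx : δf x = δ₀ := hδ₀c x hxS₀.1
  have hEq : (Set.Iio α ∩ ⋂ i, Zc i) ∩ Set.Iio (axf α x)
      = Set.Iio (axf α x) ∩ ⋂ o : (Set.Iio (δf x)), Gf x o.1 := by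
    ext z
    simp only [Set.mem_inter_iff, Set.mem_iInter, Set.mem_Iio]
    constructor
    · rintro ⟨⟨hz1, hz2⟩, hz3⟩
      refine ⟨hz3, fun o => ?_⟩
      have ho' : (o : Ordinal) < δ₀ := by rw [← hδx]; exact o.2
      have hzi := hz2 ⟨o.1, ho'⟩
      have htr := hZc3 ⟨o.1, ho'⟩ x (Set.mem_iInter.1 hxT₁.2 ⟨o.1, ho'⟩)
      have : z ∈ Zc ⟨o.1, ho'⟩ ∩ Set.Iio (axf α x) := ⟨hzi, hz3⟩
      rw [htr] at this
      exact this
    · rintro ⟨hz3, hz⟩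
      refine ⟨⟨hz3.trans haxα, fun i => ?_⟩, hz3⟩
      have oi : (i : Ordinal) < δf x := by rw [hδx]; exact i.2
      have hzi := hz ⟨i.1, oi⟩
      have htr := hZc3 i x (Set.mem_iInter.1 hxT₁.2 i)
      have : z ∈ Gf x (i : Ordinal) := hzi
      rw [← htr] at this
      exact this.1
  rw [hEq] at hxtr
  exact hGf2 x hxS₀.2 hxtr

theorem ae_measurable (hlam : lam.card = 2 ^ α.card) :
    {x | x ∈ Pgood α lam ∧ IsMeasurable (axf α x)} ∈ F := by
  have h1 := h.ae_card
  have h2 := h.ax_gt h.omega_lt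
  have h3 := h.ae_univ hlam
  have h4 := h.ae_empty hlam
  have h5 := h.ae_ultra hlam
  have h6 := h.ae_superset hlam
  have h7 := h.ae_inter hlam
  have h8 := h.ae_nonpr hlam
  have h9 := h.ae_complete hlam
  have hbig := h.huf.inter_mem _ (h.huf.inter_mem _ (h.huf.inter_mem _ (h.huf.inter_mem _
    (h.huf.inter_mem _ (h.huf.inter_mem _ (h.huf.inter_mem _ (h.huf.inter_mem _ h1 _ h2)
    _ h3) _ h4) _ h5) _ h6) _ h7) _ h8) _ h9
  refine h.huf.superset_mem _ hbig _ (fun x hx => hx.1.1) ?_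
  rintro x ⟨⟨⟨⟨⟨⟨⟨⟨⟨hg, hcard⟩, ⟨-, homega⟩⟩, ⟨-, huniv⟩⟩, ⟨-, hempty⟩⟩, ⟨-, hultra⟩⟩,
    ⟨-, hsup⟩⟩, ⟨-, hint⟩⟩, ⟨-, hnp⟩⟩, ⟨-, hcompl⟩⟩
  refine ⟨hg, hcard, homega, ux α lam F x, ?_, hnp, hcompl⟩
  exact ⟨fun W hW => hW.1, huniv, hempty, fun X hX Y hY hXY => hsup X hX Y hY hXY,
    fun X hX Y hY => hint X hX Y hY, fun W hW => hultra W hW⟩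

theorem meas_in_dU (hlam : lam.card = 2 ^ α.card) : measSet α ∈ dUF α lam F := by
  refine h.dU_mem_of_superset (h.ae_measurable hlam) (fun β hβ => hβ.1) ?_
  rintro x ⟨hg, hm⟩
  exact ⟨hg, hg.2.2, hm⟩

end PSetup

/-! ### Consequences for supercompact cardinals -/

theorem IsSupercompact.package {α : Ordinal.{0}} (hsc : IsSupercompact α) :
    ∃ lam F, PSetup α lam F ∧ lam.card = 2 ^ α.card := by
  set lam := ((2 : Cardinal) ^ α.card).ord with hlamdef
  have hcardlam : IsCard lam := by rw [IsCard, Cardinal.card_ord]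
  have hαlam : α ≤ lam := by
    calc α = α.card.ord := hsc.1.symm
      _ ≤ lam := Cardinal.ord_le_ord.2 (Cardinal.cantor α.card).le
  obtain ⟨F, h1, h2, h3, h4⟩ := hsc.2 lam hcardlam hαlam
  exact ⟨lam, F, ⟨hsc.1, hαlam, h1, h2, h3, h4⟩, Cardinal.card_ord _⟩

theorem IsSupercompact.isMeasurable {α : Ordinal.{0}} (hsc : IsSupercompact α) :
    IsMeasurable α := by
  obtain ⟨lam, F, hps, hlam⟩ := hsc.package
  exact ⟨hsc.1, hps.omega_lt, dUF α lam F, hps.dU_uf, hps.dU_nonprincipal, hps.dU_complete⟩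

theorem IsSupercompact.exists_normal {α : Ordinal.{0}} (hsc : IsSupercompact α) :
    ∃ u, IsNormalUltrafilterOn α u ∧ measSet α ∈ u := by
  obtain ⟨lam, F, hps, hlam⟩ := hsc.package
  exact ⟨dUF α lam F, hps.dU_normal, hps.meas_in_dU hlam⟩

theorem IsSupercompact.isCompact {α : Ordinal.{0}} (hsc : IsSupercompact α) :
    IsCompact α := by
  refine ⟨hsc.1, hsc.isMeasurable.2.1, fun lam h1 h2 => ?_⟩
  obtain ⟨F, ha, hb, hc, -⟩ := hsc.2 lam h1 h2
  exact ⟨F, ha, hb, hc⟩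

/-! ### Menas' theorem: a measurable limit of compact cardinals is compact -/

theorem menas_s2 {β : Ordinal.{0}} (hmeas : IsMeasurable β)
    (hcomp : ∀ γ < β, ∃ δ, IsCompact δ ∧ γ < δ ∧ δ < β) : IsCompact β := by
  classical
  obtain ⟨hcard, hω, u, huf, hnp, hucompl⟩ := hmeas
  have hlim : Order.IsSuccLimit β := IsMeasurable.isLimit ⟨hcard, hω, u, huf, hnp, hucompl⟩
  refine ⟨hcard, hω, fun lam hclam hβlam => ?_⟩
  -- cobounded sets belong to u
  have hcob : ∀ γ < β, {γ' | γ ≤ γ' ∧ γ' < β} ∈ u := by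
    intro γ hγ
    have hset : (Set.Iio β ∩ ⋂ i : (Set.Iio γ), (Set.Iio β \ {(i : Ordinal)}))
        = {γ' | γ ≤ γ' ∧ γ' < β} := by
      ext z
      simp only [Set.mem_inter_iff, Set.mem_iInter, Set.mem_diff, Set.mem_Iio,
        Set.mem_singleton_iff, Set.mem_setOf_eq]
      constructor
      · rintro ⟨hz, hall⟩
        refine ⟨?_, hz⟩
        by_contra hcon
        push_neg at hcon
        exact (hall ⟨z, hcon⟩).2 rfl
      · rintro ⟨h1, h2⟩
        exact ⟨h2, fun i => ⟨h2, fun heq => absurd (heq ▸ i.2) (not_lt.2 h1)⟩⟩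
    rw [← hset]
    refine hucompl γ hγ _ (fun i => ?_)
    refine huf.compl_mem_of_not_mem ?_ (hnp i)
    intro z hz
    rw [Set.mem_singleton_iff.1 hz]
    exact Set.mem_Iio.2 (i.2.trans hγ)
  choose! nf hnf1 hnf2 hnf3 using hcomp
  have hFch : ∀ γ, γ < β → ∃ G, IsUltrafilterOnSet (sP (nf γ) lam) G ∧
      IsComplete (nf γ) (sP (nf γ) lam) G ∧ IsFine (nf γ) lam G := by
    intro γ hγ
    exact (hnf1 γ hγ).2.2 lam hclam (le_trans (hnf3 γ hγ).le hβlam)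
  choose! Gf hGf1 hGf2 hGf3 using hFch
  have hsPmono : ∀ γ, γ < β → sP (nf γ) lam ⊆ sP β lam := by
    intro γ hγ x hx
    exact ⟨hx.1, lt_of_lt_of_le hx.2 (Cardinal.lift_le.2
      (Ordinal.card_le_card (hnf3 γ hγ).le))⟩
  set G : Set (Set (Set Ordinal)) :=
    {X | X ⊆ sP β lam ∧ {γ | γ < β ∧ X ∩ sP (nf γ) lam ∈ Gf γ} ∈ u} with hGdef
  have hSsub : ∀ X : Set (Set Ordinal), {γ | γ < β ∧ X ∩ sP (nf γ) lam ∈ Gf γ} ⊆ Set.Iio β :=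
    fun X γ hγ => hγ.1
  refine ⟨G, ?_, ?_, ?_⟩
  · constructor
    · exact fun X hX => hX.1
    · refine ⟨Set.Subset.rfl, ?_⟩
      refine huf.superset_mem _ huf.univ_mem _ (hSsub _) ?_
      intro γ hγ
      refine ⟨hγ, ?_⟩
      have : sP β lam ∩ sP (nf γ) lam = sP (nf γ) lam :=
        Set.inter_eq_right.2 (hsPmono γ hγ)
      rw [this]
      exact (hGf1 γ hγ).univ_mem
    · rintro ⟨-, hS⟩
      have hempty : {γ | γ < β ∧ (∅ : Set (Set Ordinal)) ∩ sP (nf γ) lam ∈ Gf γ} = ∅ := by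
        ext γ
        simp only [Set.mem_setOf_eq, Set.mem_empty_iff_false, iff_false, not_and]
        intro hγ hmem
        rw [Set.empty_inter] at hmem
        exact (hGf1 γ hγ).empty_not_mem hmem
      rw [hempty] at hS
      exact huf.empty_not_mem hS
    · rintro X ⟨hX1, hX2⟩ Y hY hXY
      refine ⟨hY, huf.superset_mem _ hX2 _ (hSsub _) ?_⟩
      rintro γ ⟨hγ, hmem⟩
      refine ⟨hγ, (hGf1 γ hγ).superset_mem _ hmem _ Set.inter_subset_right ?_⟩
      exact Set.inter_subset_inter_left _ hXY
    · rintro X ⟨hX1, hX2⟩ Y ⟨hY1, hY2⟩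
      refine ⟨Set.inter_subset_left.trans hX1, ?_⟩
      refine huf.superset_mem _ (huf.inter_mem _ hX2 _ hY2) _ (hSsub _) ?_
      rintro γ ⟨⟨hγ, hm1⟩, ⟨-, hm2⟩⟩
      refine ⟨hγ, ?_⟩
      have : (X ∩ Y) ∩ sP (nf γ) lam = (X ∩ sP (nf γ) lam) ∩ (Y ∩ sP (nf γ) lam) := by
        ext z; constructor
        · rintro ⟨⟨hz1, hz2⟩, hz3⟩; exact ⟨⟨hz1, hz3⟩, hz2, hz3⟩
        · rintro ⟨⟨hz1, hz3⟩, hz2, -⟩; exact ⟨⟨hz1, hz2⟩, hz3⟩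
      rw [this]
      exact (hGf1 γ hγ).inter_mem _ hm1 _ hm2
    · intro X hXsub
      by_cases hS : {γ | γ < β ∧ X ∩ sP (nf γ) lam ∈ Gf γ} ∈ u
      · exact Or.inl ⟨hXsub, hS⟩
      · refine Or.inr ⟨Set.diff_subset, ?_⟩
        have hcpl := huf.compl_mem_of_not_mem (hSsub X) hS
        refine huf.superset_mem _ hcpl _ (hSsub _) ?_
        rintro γ ⟨hγ, hnm⟩
        refine ⟨hγ, ?_⟩
        have hnm' : X ∩ sP (nf γ) lam ∉ Gf γ := fun hc => hnm ⟨hγ, hc⟩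
        have hcg := (hGf1 γ hγ).compl_mem_of_not_mem Set.inter_subset_right hnm'
        refine (hGf1 γ hγ).superset_mem _ hcg _ Set.inter_subset_right ?_
        rintro z ⟨hz1, hz2⟩
        exact ⟨⟨hsPmono γ hγ hz1, fun hzX => hz2 ⟨hzX, hz1⟩⟩, hz1⟩
  · intro δ' hδ' g hg
    have hbig := hucompl δ' hδ' (fun i => {γ | γ < β ∧ g i ∩ sP (nf γ) lam ∈ Gf γ})
      (fun i => (hg i).2)
    have hcb := hcob δ' hδ'
    refine ⟨Set.inter_subset_left, ?_⟩
    refine huf.superset_mem _ (huf.inter_mem _ hbig _ hcb) _ (hSsub _) ?_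
    rintro γ ⟨⟨hγβ, hall⟩, hδγ, -⟩
    refine ⟨hγβ, ?_⟩
    have hδnf : δ' < nf γ := lt_of_le_of_lt hδγ (hnf2 γ hγβ)
    have hing := (hGf2 γ hγβ) δ' hδnf (fun i => g i ∩ sP (nf γ) lam)
      (fun i => (Set.mem_iInter.1 hall i).2)
    have heq : sP (nf γ) lam ∩ ⋂ i, (g i ∩ sP (nf γ) lam)
        = (sP β lam ∩ ⋂ i, g i) ∩ sP (nf γ) lam := by
      ext z
      simp only [Set.mem_inter_iff, Set.mem_iInter]
      constructor
      · rintro ⟨hz1, hz2⟩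
        exact ⟨⟨hsPmono γ hγβ hz1, fun i => (hz2 i).1⟩, hz1⟩
      · rintro ⟨⟨-, hz2⟩, hz3⟩
        exact ⟨hz3, fun i => ⟨hz2 i, hz3⟩⟩
    rw [heq] at hing
    exact hing
  · intro i hi
    refine ⟨fun x hx => hx.1, ?_⟩
    refine huf.superset_mem _ huf.univ_mem _ (hSsub _) ?_
    intro γ hγ
    refine ⟨hγ, ?_⟩
    have heq : {x | x ∈ sP β lam ∧ i ∈ x} ∩ sP (nf γ) lam
        = {x | x ∈ sP (nf γ) lam ∧ i ∈ x} := by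
      ext z
      constructor
      · rintro ⟨⟨-, hz2⟩, hz3⟩; exact ⟨hz3, hz2⟩
      · rintro ⟨hz1, hz2⟩; exact ⟨⟨hsPmono γ hγ hz1, hz2⟩, hz1⟩
    rw [heq]
    exact hGf3 γ hγ i hi

/-! ### The sum of normal ultrafilters over a normal ultrafilter is normal -/

theorem sum_normal {κ : Ordinal.{0}} (hκlim : Order.IsSuccLimit κ) {V : Set (Set Ordinal)}
    (hV : IsNormalUltrafilterOn κ V) (U : Ordinal → Set (Set Ordinal))
    {G : Set Ordinal} (hG : G ∈ V)
    (hGm : ∀ α ∈ G, α < κ ∧ IsMeasurable α)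
    (hGn : ∀ α ∈ G, IsNormalUltrafilterOn α (U α)) :
    IsNormalUltrafilterOn κ (sumUF κ U V) := by
  have hsXsub : ∀ Y, sX κ U Y ⊆ Set.Iio κ := fun Y α hα => hα.1
  have hGin : ∀ Y, Y ⊆ Set.Iio κ → ∀ α ∈ G, Y ∩ Set.Iio α ∈ U α → α ∈ sX κ U Y := by
    intro Y hY α hα hm
    exact ⟨(hGm α hα).1, (hGm α hα).2, hm⟩
  have hdich : ∀ Y, Y ⊆ Set.Iio κ → G ⊆ sX κ U Y ∪ sX κ U (Set.Iio κ \ Y) := by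
    intro Y hY α hα
    rcases (hGn α hα).uf.mem_or_compl_mem (Y ∩ Set.Iio α) Set.inter_subset_right with hm | hm
    · exact Or.inl (hGin Y hY α hα hm)
    · refine Or.inr (hGin _ Set.diff_subset α hα ?_)
      have heq : Set.Iio α \ (Y ∩ Set.Iio α) = (Set.Iio κ \ Y) ∩ Set.Iio α := by
        ext z
        simp only [Set.mem_diff, Set.mem_inter_iff, Set.mem_Iio]
        constructor
        · rintro ⟨h1, h2⟩
          exact ⟨⟨h1.trans ((hGm α hα).1), fun hz => h2 ⟨hz, h1⟩⟩, h1⟩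
        · rintro ⟨⟨h1, h2⟩, h3⟩
          exact ⟨h3, fun hz => h2 hz.1⟩
      rw [← heq]
      exact hm
  constructor
  · constructor
    · exact fun Y hY => hY.1
    · refine ⟨Set.Subset.rfl, ?_⟩
      refine hV.uf.superset_mem _ hG _ (hsXsub _) ?_
      intro α hα
      refine hGin _ Set.Subset.rfl α hα ?_
      have heq : Set.Iio κ ∩ Set.Iio α = Set.Iio α :=
        Set.inter_eq_right.2 (Set.Iio_subset_Iio (hGm α hα).1.le)
      rw [heq]
      exact (hGn α hα).uf.univ_mem
    · rintro ⟨-, hS⟩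
      obtain ⟨α, hα1, hα2⟩ := hV.uf.inter_nonempty hS hG
      have := hα1.2.2
      rw [Set.empty_inter] at this
      exact (hGn α hα2).uf.empty_not_mem this
    · rintro Y ⟨hY1, hY2⟩ Y' hY' hYY'
      refine ⟨hY', ?_⟩
      refine hV.uf.superset_mem _ (hV.uf.inter_mem _ hY2 _ hG) _ (hsXsub _) ?_
      rintro α ⟨⟨h1, h2, h3⟩, hαG⟩
      refine hGin _ hY' α hαG ?_
      exact (hGn α hαG).uf.superset_mem _ h3 _ Set.inter_subset_right
        (Set.inter_subset_inter_left _ hYY')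
    · rintro Y ⟨hY1, hY2⟩ Y' ⟨hY'1, hY'2⟩
      refine ⟨Set.inter_subset_left.trans hY1, ?_⟩
      refine hV.uf.superset_mem _ (hV.uf.inter_mem _ (hV.uf.inter_mem _ hY2 _ hY'2) _ hG) _
        (hsXsub _) ?_
      rintro α ⟨⟨⟨h1, h2, h3⟩, ⟨-, -, h3'⟩⟩, hαG⟩
      refine hGin _ (Set.inter_subset_left.trans hY1) α hαG ?_
      have heq : (Y ∩ Y') ∩ Set.Iio α = (Y ∩ Set.Iio α) ∩ (Y' ∩ Set.Iio α) := by
        ext z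
        constructor
        · rintro ⟨⟨a, b⟩, c⟩; exact ⟨⟨a, c⟩, b, c⟩
        · rintro ⟨⟨a, c⟩, b, -⟩; exact ⟨⟨a, b⟩, c⟩
      rw [heq]
      exact (hGn α hαG).uf.inter_mem _ h3 _ h3'
    · intro Y hY
      by_cases hS : sX κ U Y ∈ V
      · exact Or.inl ⟨hY, hS⟩
      · refine Or.inr ⟨Set.diff_subset, ?_⟩
        have hcpl := hV.uf.compl_mem_of_not_mem (hsXsub Y) hS
        refine hV.uf.superset_mem _ (hV.uf.inter_mem _ hcpl _ hG) _ (hsXsub _) ?_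
        rintro α ⟨⟨hκα, hnm⟩, hαG⟩
        rcases hdich Y hY hαG with hm | hm
        · exact absurd hm hnm
        · exact hm
  constructor
  · intro α₀ hα₀
    refine ⟨fun β hβ => hβ.2, ?_⟩
    have hsucc : α₀ + 1 < κ := by
      rw [Ordinal.add_one_eq_succ]; exact hκlim.succ_lt hα₀
    refine hV.uf.superset_mem _ (hV.uf.inter_mem _ (hV.2.1 _ hsucc) _ hG) _ (hsXsub _) ?_
    rintro α ⟨⟨hα1, hα2⟩, hαG⟩
    have hα₀α : α₀ < α := lt_of_lt_of_le (lt_add_one α₀) hα1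
    refine hGin _ (fun β hβ => hβ.2) α hαG ?_
    have heq : {β | α₀ ≤ β ∧ β < κ} ∩ Set.Iio α = {β | α₀ ≤ β ∧ β < α} := by
      ext z
      simp only [Set.mem_inter_iff, Set.mem_setOf_eq, Set.mem_Iio]
      constructor
      · rintro ⟨⟨a, b⟩, c⟩; exact ⟨a, c⟩
      · rintro ⟨a, c⟩; exact ⟨⟨a, c.trans (hGm α hαG).1⟩, c⟩
    rw [heq]
    exact (hGn α hαG).2.1 α₀ hα₀α
  · rintro f S ⟨hSsub, hSX⟩ hreg
    set S' := sX κ U S ∩ G with hS'def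
    have hS'V : S' ∈ V := hV.uf.inter_mem _ hSX _ hG
    have hch2 : ∀ α ∈ S', ∃ γα, γα < α ∧ {β | β < α ∧ f β = γα} ∈ U α := by
      rintro α ⟨⟨hακ, hαm, hαS⟩, hαG⟩
      obtain ⟨Tα, hTα, γα, hγα⟩ := (hGn α hαG).2.2 f _ hαS
        (fun β hβ h0 => hreg β hβ.1 h0)
      have h1lt : (1 : Ordinal) < α := by
        have := hαm.isLimit
        exact Ordinal.one_lt_of_isSuccLimit this
      have hTne := (hGn α hαG).uf.inter_nonempty
        (hTα) ((hGn α hαG).uf.inter_mem _ hαS _ ((hGn α hαG).2.1 1 h1lt))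
      obtain ⟨β, hβT, ⟨hβS, hβα⟩, hβ1, hβα2⟩ := hTne
      have hγαval : γα = f β := (hγα β hβT).symm
      have hγαlt : γα < α := by
        rw [hγαval]
        exact (hreg β hβS (lt_of_lt_of_le zero_lt_one hβ1)).trans hβα2
      refine ⟨γα, hγαlt, ?_⟩
      refine (hGn α hαG).uf.superset_mem _ hTα _ (fun z hz => hz.1) ?_
      intro z hz
      exact ⟨(hGn α hαG).uf.sets_subset _ hTα hz, hγα z hz⟩
    choose! gf hgf1 hgf2 using hch2
    obtain ⟨T', hT'V, γ, hγ⟩ := hV.2.2 gf S' hS'V (fun α hα h0 => hgf1 α hα)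
    refine ⟨{β | β < κ ∧ f β = γ}, ⟨fun β hβ => hβ.1, ?_⟩, γ, fun β hβ => hβ.2⟩
    refine hV.uf.superset_mem _ (hV.uf.inter_mem _ hT'V _ hS'V) _ (hsXsub _) ?_
    rintro α ⟨hαT', hαS'⟩
    refine hGin _ (fun β hβ => hβ.1) α hαS'.2 ?_
    have hm := hgf2 α hαS'
    rw [hγ α hαT'] at hm
    refine (hGn α hαS'.2).uf.superset_mem _ hm _ Set.inter_subset_right ?_
    intro z hz
    exact ⟨⟨hz.1.trans (hGm α hαS'.2).1, hz.2⟩, hz.1⟩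

/-! ### The main theorem -/

theorem main_aux : ∀ κ : Ordinal.{0}, IsMeasurable κ → ∀ V : Set (Set Ordinal),
    IsNormalUltrafilterOn κ V → {α | α < κ ∧ IsSupercompact α} ∈ V →
    ∃ W, IsNormalUltrafilterOn κ W ∧ {α | α < κ ∧ IsCompact α} ∈ W ∧
      {α | α < κ ∧ IsSupercompact α} ∉ W := by
  intro κ
  induction κ using Ordinal.induction with
  | h κ IH =>
  intro hκ V hV hsc
  classical
  set A := {α | α < κ ∧ IsSupercompact α} with hAdef
  have hκlim : Order.IsSuccLimit κ := hκ.isLimit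
  have hAunb : ∀ γ < κ, ∃ a ∈ A, γ < a ∧ a < κ := fun γ hγ =>
    hV.exists_gt_of_mem hκlim hsc hγ
  have hLP : LPs A κ ∈ V := LPs_mem hκlim hV A hAunb
  set G := A ∩ LPs A κ with hGdef
  have hGV : G ∈ V := hV.uf.inter_mem _ hsc _ hLP
  have hsep : ∀ α ∈ G, ∃ u, IsNormalUltrafilterOn α u ∧
      {δ | δ < α ∧ IsCompact δ} ∈ u ∧ {δ | δ < α ∧ IsSupercompact δ} ∉ u := by
    rintro α ⟨⟨hακ, hαsc⟩, hαLP⟩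
    obtain ⟨lam, F, hps, hlam⟩ := hαsc.package
    have hαlim : Order.IsSuccLimit α := hαsc.isMeasurable.isLimit
    have hABunb : ∀ γ < α, ∃ a ∈ A ∩ Set.Iio α, γ < a ∧ a < α := by
      intro γ hγ
      obtain ⟨a, h1, h2, h3⟩ := hαLP.2 γ hγ
      exact ⟨a, ⟨h1, h2⟩, h3, h2⟩
    have hLPα : LPs (A ∩ Set.Iio α) α ∈ dUF α lam F :=
      LPs_mem hαlim hps.dU_normal _ hABunb
    have hMeas : measSet α ∈ dUF α lam F := hps.meas_in_dU hlam
    have hBsub : measSet α ∩ LPs (A ∩ Set.Iio α) α ⊆ {δ | δ < α ∧ IsCompact δ} := by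
      rintro δ ⟨⟨hδα, hδm⟩, hδLP⟩
      refine ⟨hδα, menas_s2 hδm ?_⟩
      intro γ hγ
      obtain ⟨a, ⟨haA, haα⟩, haδ, hγa⟩ := hδLP.2 γ hγ
      exact ⟨a, haA.2.isCompact, hγa, haδ⟩
    have hCU : {δ | δ < α ∧ IsCompact δ} ∈ dUF α lam F :=
      (hps.dU_uf).superset_mem _ ((hps.dU_uf).inter_mem _ hMeas _ hLPα) _
        (fun δ hδ => hδ.1) hBsub
    by_cases hAU : {δ | δ < α ∧ IsSupercompact δ} ∈ dUF α lam F
    · exact IH α hακ hαsc.isMeasurable (dUF α lam F) hps.dU_normal hAU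
    · exact ⟨dUF α lam F, hps.dU_normal, hCU, hAU⟩
  choose! Uf hUf1 hUf2 hUf3 using hsep
  have hGm : ∀ α ∈ G, α < κ ∧ IsMeasurable α := fun α hα =>
    ⟨hα.1.1, hα.1.2.isMeasurable⟩
  have hWnorm := sum_normal hκlim hV Uf hGV hGm hUf1
  refine ⟨sumUF κ Uf V, hWnorm, ?_, ?_⟩
  · refine ⟨fun β hβ => hβ.1, ?_⟩
    refine hV.uf.superset_mem _ hGV _ (fun α hα => hα.1) ?_
    intro α hα
    refine ⟨hα.1.1, (hGm α hα).2, ?_⟩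
    have heq : {β | β < κ ∧ IsCompact β} ∩ Set.Iio α = {δ | δ < α ∧ IsCompact δ} := by
      ext z
      simp only [Set.mem_inter_iff, Set.mem_setOf_eq, Set.mem_Iio]
      constructor
      · rintro ⟨⟨h1, h2⟩, h3⟩; exact ⟨h3, h2⟩
      · rintro ⟨h1, h2⟩; exact ⟨⟨h1.trans hα.1.1, h2⟩, h1⟩
    rw [heq]
    exact hUf2 α hα
  · rintro ⟨-, hS⟩
    obtain ⟨α, hα1, hα2⟩ := hV.uf.inter_nonempty hS hGV
    have heq : {β | β < κ ∧ IsSupercompact β} ∩ Set.Iio α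
        = {δ | δ < α ∧ IsSupercompact δ} := by
      ext z
      simp only [Set.mem_inter_iff, Set.mem_setOf_eq, Set.mem_Iio]
      constructor
      · rintro ⟨⟨h1, h2⟩, h3⟩; exact ⟨h3, h2⟩
      · rintro ⟨h1, h2⟩; exact ⟨⟨h1.trans hα2.1.1, h2⟩, h1⟩
    have hmem := hα1.2.2
    rw [heq] at hmem
    exact hUf3 α hα2 hmem

/-- If `κ` is measurable and `V` is a normal ultrafilter on `κ` containing the supercompact
cardinals below `κ`, then there is a normal ultrafilter `W` on `κ` containing the compact
cardinals below `κ` but not the supercompact cardinals below `κ`. -/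
theorem separate_compact_from_supercompact (κ : Ordinal) (hκ : IsMeasurable κ)
    (V : Set (Set Ordinal)) (hV : IsNormalUltrafilterOn κ V)
    (hsc : {α | α < κ ∧ IsSupercompact α} ∈ V) :
    ∃ W, IsNormalUltrafilterOn κ W ∧ {α | α < κ ∧ IsCompact α} ∈ W ∧
      {α | α < κ ∧ IsSupercompact α} ∉ W := by
  exact main_aux κ hκ V hV hsc

end Separability
end
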